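/- arXiv:1901.08261 — 6 statements merged into one kernel-verified Lean document; each statement's English description precedes it below -/
import Mathlib

section
/- Let n ≥ 2 and let E ⊆ ℝ^{n+1} be a closed set. Then there exists a constant C ≥ 1, depending only on n, such that for each k ∈ ℤ there is a collection 𝔻_k = {Q_j^k ⊆ E : j ∈ J_k} of Borel subsets of E (where J_k is a possibly finite index set) satisfying: (a) E = ⋃_{j ∈ J_k} Q_j^k for each k ∈ ℤ, and for each fixed k the sets Q_j^k are pairwise disjoint; (b) if m ≤ k then either Q_j^k ⊆ Q_i^m or Q_i^m ∩ Q_j^k = ∅; (c) for each k ∈ ℤ, j ∈ J_k, and m < k, there is a unique i ∈ J_m such that Q_j^k ⊆ Q_i^m; (d) for each k ∈ ℤ and j ∈ J_k there is a point x_j^k ∈ E such that B(x_j^k, C^{-1} 2^{-k}) ∩ E ⊆ Q_j^k ⊆ B(x_j^k, C 2^{-k}) ∩ E. -/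
open Metric
set_option linter.unusedSectionVars false

open Metric Set TopologicalSpace
open scoped Classical

noncomputable section

namespace DyadicGridCD

variable {X : Type*} [MetricSpace X] [ProperSpace X] [SeparableSpace X] [Nonempty X]

/-- scale of generation `j` : `32^(-j)`. -/
def sc (j : ℤ) : ℝ := (32 : ℝ) ^ (-j)

lemma sc_pos (j : ℤ) : 0 < sc j := by unfold sc; positivity

lemma sc_mono {m j : ℤ} (h : m ≤ j) : sc j ≤ sc m :=
  zpow_le_zpow_right₀ (by norm_num) (by omega)

lemma sc_succ (j : ℤ) : sc (j + 1) = sc j / 32 := by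
  unfold sc
  rw [neg_add, zpow_add₀ (by norm_num : (32:ℝ) ≠ 0)]
  norm_num; ring

lemma sc_succ_le (j : ℤ) : 32 * sc (j+1) ≤ sc j := by
  rw [sc_succ]; ring_nf; exact le_rfl

variable (E : Set X)

/-- `memNet E x k` : `x` belongs to the `k`-th generation net. -/
def memNet : X → ℤ → Prop :=
  (IsWellFounded.wf (r := (WellOrderingRel : X → X → Prop))).fix
    (fun x rec k => x ∈ E ∧ ∀ k' : ℤ, k ≤ k' → ∀ y, ∀ h : WellOrderingRel y x, rec y h k' → sc k' ≤ dist x y)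

lemma memNet_iff {x : X} {k : ℤ} :
    memNet E x k ↔ (x ∈ E ∧ ∀ k' : ℤ, k ≤ k' → ∀ y, WellOrderingRel y x → memNet E y k' → sc k' ≤ dist x y) := by
  unfold memNet
  rw [WellFounded.fix_eq]

lemma memNet_mem_E {x : X} {k : ℤ} (h : memNet E x k) : x ∈ E := ((memNet_iff E).1 h).1

lemma memNet_mono {x : X} {k k' : ℤ} (hk : k ≤ k') (h : memNet E x k) : memNet E x k' := by
  rw [memNet_iff] at h ⊢
  exact ⟨h.1, fun k'' hk'' y hy hmem => h.2 k'' (le_trans hk hk'') y hy hmem⟩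

lemma memNet_sep {x y : X} {k : ℤ} (hx : memNet E x k) (hy : memNet E y k) (hxy : x ≠ y) :
    sc k ≤ dist x y := by
  rcases trichotomous_of (WellOrderingRel : X → X → Prop) x y with h | h | h
  · rw [dist_comm]
    exact ((memNet_iff E).1 hy).2 k le_rfl x h hx
  · exact absurd h hxy
  · exact ((memNet_iff E).1 hx).2 k le_rfl y h hy

private lemma claimA {x : X} {k : ℤ} (hxE : x ∈ E) (h : ¬ memNet E x k) :
    ∃ k', k ≤ k' ∧ ∃ y, WellOrderingRel y x ∧ memNet E y k' ∧ dist x y < sc k' := by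
  rw [memNet_iff] at h
  push_neg at h
  exact h hxE

private lemma claimB {y : X} {j : ℤ} (h1 : memNet E y (j+1)) (h2 : ¬ memNet E y j) :
    ∃ y', memNet E y' j ∧ dist y y' < sc j := by
  obtain ⟨k', hk', y', hw, hy', hd⟩ := claimA E (memNet_mem_E E h1) h2
  rcases lt_or_ge k' (j+1) with h | h
  · have : k' = j := by omega
    exact ⟨y', by rwa [← this], by rwa [← this]⟩
  · exfalso
    exact absurd hd (not_lt.2 (((memNet_iff E).1 h1).2 k' h y' hw hy'))

private lemma claimC {k : ℤ} : ∀ t : ℕ, ∀ y : X, memNet E y (k + t) →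
    ∃ x', memNet E x' k ∧ dist y x' ≤ 2 * sc k - 2 * sc (k + t) := by
  intro t
  induction t with
  | zero => intro y hy; exact ⟨y, by simpa using hy, by simp⟩
  | succ t ih =>
    intro y hy
    by_cases h : memNet E y (k + t)
    · obtain ⟨x', hx', hd⟩ := ih y h
      refine ⟨x', hx', hd.trans ?_⟩
      have := sc_mono (show (k + t : ℤ) ≤ k + (t+1 : ℕ) by push_cast; omega)
      linarith
    · have hy' : memNet E y ((k + t) + 1) := by
        have : (k + ((t:ℤ)+1)) = (k+t) + 1 := by ring
        rw [show ((t+1 : ℕ) : ℤ) = (t : ℤ) + 1 by push_cast; ring] at hy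
        rwa [← this]
      obtain ⟨y', hy'net, hdy⟩ := claimB E hy' h
      obtain ⟨x', hx', hd⟩ := ih y' hy'net
      refine ⟨x', hx', ?_⟩
      have h32 : 32 * sc ((k+t) + 1) ≤ sc (k + t) := sc_succ_le _
      have hcast : (k + ((t:ℤ)+1)) = (k+t) + 1 := by ring
      have : sc (k + ((t+1:ℕ):ℤ)) = sc ((k+t)+1) := by
        rw [show ((t+1 : ℕ) : ℤ) = (t : ℤ) + 1 by push_cast; ring, hcast]
      rw [this]
      have hpos := sc_pos ((k+t)+1)
      calc dist y x' ≤ dist y y' + dist y' x' := dist_triangle _ _ _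
        _ ≤ sc (k+t) + (2 * sc k - 2 * sc (k+t)) := by linarith
        _ ≤ 2 * sc k - 2 * sc ((k+t)+1) := by linarith

lemma net_cover {z : X} (hz : z ∈ E) (k : ℤ) :
    ∃ y, memNet E y k ∧ dist z y ≤ 2 * sc k := by
  by_cases h : memNet E z k
  · refine ⟨z, h, ?_⟩
    have := sc_pos k
    simp only [dist_self]
    linarith
  · obtain ⟨k', hk', y, _, hy, hd⟩ := claimA E hz h
    obtain ⟨x', hx', hd'⟩ := claimC E (k' - k).toNat y (by
      rwa [show (k + ((k'-k).toNat : ℤ)) = k' by omega])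
    refine ⟨x', hx', ?_⟩
    rw [show (k + ((k'-k).toNat : ℤ)) = k' by omega] at hd'
    have h1 : sc k' ≤ sc k := sc_mono (by omega)
    have h2 := sc_pos k'
    calc dist z x' ≤ dist z y + dist y x' := dist_triangle _ _ _
      _ ≤ sc k' + (2 * sc k - 2 * sc k') := by linarith
      _ ≤ 2 * sc k := by linarith

/-- the net, as a set -/
def Net (k : ℤ) : Set X := {x | memNet E x k}

lemma net_countable (k : ℤ) : (Net E k).Countable := by
  obtain ⟨u, hu⟩ := exists_dense_seq X
  have : ∀ x : Net E k, ∃ i : ℕ, dist (u i) (x : X) < sc k / 2 := by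
    intro x
    have := hu.exists_dist_lt (x : X) (by linarith [sc_pos k] : (0:ℝ) < sc k / 2)
    obtain ⟨i, hi⟩ := this
    exact ⟨i, by rwa [dist_comm] at hi⟩
  choose F hF using this
  have hinj : Function.Injective F := by
    intro a b hab
    have h1 := hF a
    have h2 := hF b
    rw [hab] at h1
    by_contra hne
    have hnex : (a : X) ≠ b := fun h => hne (Subtype.ext h)
    have := memNet_sep E a.2 b.2 hnex
    have : sc k ≤ dist (a : X) (u (F b)) + dist (u (F b)) (b : X) := by
      calc sc k ≤ dist (a:X) (b:X) := this
        _ ≤ _ := dist_triangle _ _ _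
    rw [dist_comm (a : X)] at this
    linarith
  have : Countable (Net E k) := ⟨⟨F, hinj⟩⟩
  exact (countable_coe_iff).1 this

lemma net_closed (k : ℤ) : IsClosed (Net E k) := by
  rw [← isOpen_compl_iff]
  rw [isOpen_iff_forall_mem_open]
  intro x hx
  by_cases h : ∃ y ∈ Net E k, dist x y < sc k / 2
  · obtain ⟨y, hy, hd⟩ := h
    have hxy : x ≠ y := fun h => hx (h ▸ hy)
    refine ⟨ball x (min (dist x y) (sc k / 2)), ?_, isOpen_ball, ?_⟩
    · intro w hw hwnet
      simp only [mem_ball] at hw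
      have hw1 : dist w x < dist x y := lt_of_lt_of_le hw (min_le_left _ _)
      have hw2 : dist w x < sc k / 2 := lt_of_lt_of_le hw (min_le_right _ _)
      have hwy : w ≠ y := by
        intro hh; subst hh
        rw [dist_comm] at hw1; exact lt_irrefl _ hw1
      have hsep := memNet_sep E hwnet hy hwy
      have htri : sc k ≤ dist w x + dist x y := le_trans hsep (dist_triangle _ _ _)
      linarith
    · exact mem_ball_self (lt_min (dist_pos.2 hxy) (by linarith [sc_pos k]))
  · push_neg at h
    refine ⟨ball x (sc k / 2), ?_, isOpen_ball, mem_ball_self (by linarith [sc_pos k])⟩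
    intro w hw hwnet
    exact absurd (by rw [dist_comm]; exact hw) (not_lt.2 (h w hwnet))

instance net_discrete (k : ℤ) : DiscreteTopology (Net E k) := by
  rw [discreteTopology_iff_isOpen_singleton]
  intro a
  have : {a} = (Subtype.val ⁻¹' (ball (a : X) (sc k)) : Set (Net E k)) := by
    ext b
    simp only [Set.mem_singleton_iff, Set.mem_preimage, mem_ball]
    constructor
    · intro h; subst h; simpa using sc_pos k
    · intro h
      by_contra hne
      have : (b : X) ≠ (a : X) := fun hh => hne (Subtype.ext hh)
      exact absurd h (not_lt.2 (memNet_sep E b.2 a.2 this))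
  rw [this]
  exact isOpen_ball.preimage continuous_subtype_val

lemma net_finite (k : ℤ) {z : X} {R : ℝ} : (closedBall z R ∩ Net E k).Finite :=
  Metric.finite_isBounded_inter_isClosed ⟨net_discrete E k⟩ isBounded_closedBall (net_closed E k)

/-! ### enumeration of nets, parent maps, ancestors -/

def enum (k : ℤ) : ℕ → X :=
  if h : ∃ f : ℕ → X, Net E k = Set.range f then h.choose else fun _ => Classical.arbitrary X

lemma net_nonempty (hne : E.Nonempty) (k : ℤ) : (Net E k).Nonempty := by
  obtain ⟨z, hz⟩ := hne
  obtain ⟨y, hy, _⟩ := net_cover E hz k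
  exact ⟨y, hy⟩

lemma enum_range (hne : E.Nonempty) (k : ℤ) : Net E k = Set.range (enum E k) := by
  unfold enum
  have h : ∃ f : ℕ → X, Net E k = Set.range f :=
    (net_countable E k).exists_eq_range (net_nonempty E hne k)
  rw [dif_pos h]
  exact h.choose_spec

lemma enum_mem (hne : E.Nonempty) (k : ℤ) (i : ℕ) : memNet E (enum E k i) k := by
  have : enum E k i ∈ Net E k := by rw [enum_range E hne k]; exact ⟨i, rfl⟩
  exact this

lemma mem_enum (hne : E.Nonempty) {k : ℤ} {x : X} (hx : memNet E x k) :
    ∃ i, enum E k i = x := by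
  have : x ∈ Set.range (enum E k) := by rw [← enum_range E hne k]; exact hx
  exact this

/-! ### a canonical `Nat`-valued choice -/

def pick (P : ℕ → Prop) : ℕ := sInf {i | P i}

lemma pick_spec {P : ℕ → Prop} (h : ∃ i, P i) : P (pick P) := Nat.sInf_mem h

lemma pick_eq_iff {P : ℕ → Prop} {i : ℕ} :
    pick P = i ↔ ((P i ∧ ∀ j < i, ¬ P j) ∨ (i = 0 ∧ ∀ j, ¬ P j)) := by
  unfold pick
  constructor
  · intro h
    by_cases hne : ∃ j, P j
    · left
      constructor
      · rw [← h]; exact Nat.sInf_mem hne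
      · intro j hj hPj
        exact absurd (h ▸ Nat.sInf_le (hPj : j ∈ {i | P i})) (by omega)
    · right
      push_neg at hne
      have : {i | P i} = ∅ := by ext j; simp [hne j]
      rw [this] at h
      simp at h
      exact ⟨h.symm, hne⟩
  · rintro (⟨hPi, hlt⟩ | ⟨hi, hall⟩)
    · have h1 : sInf {i | P i} ≤ i := Nat.sInf_le hPi
      have h2 : P (sInf {i | P i}) := Nat.sInf_mem ⟨i, hPi⟩
      by_contra hne
      exact hlt _ (by omega) h2
    · subst hi
      have : {i | P i} = ∅ := by ext j; simp [hall j]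
      rw [this]
      simp

/-! ### selection of a nearby net point -/

def iy (k : ℤ) (z : X) : ℕ := pick (fun i => dist z (enum E k i) ≤ 2 * sc k)

def ypt (k : ℤ) (z : X) : X := enum E k (iy E k z)

lemma ypt_mem (hne : E.Nonempty) (k : ℤ) (z : X) : memNet E (ypt E k z) k :=
  enum_mem E hne k _

lemma ypt_dist (hne : E.Nonempty) {z : X} (hz : z ∈ E) (k : ℤ) :
    dist z (ypt E k z) ≤ 2 * sc k := by
  obtain ⟨y, hy, hd⟩ := net_cover E hz k
  obtain ⟨i, hi⟩ := mem_enum E hne hy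
  have hex : ∃ i, dist z (enum E k i) ≤ 2 * sc k := ⟨i, by rw [hi]; exact hd⟩
  exact pick_spec hex

/-! ### parent map -/

def par (j : ℤ) (w : X) : X :=
  if h : ∃ x, memNet E x j ∧ dist w x < sc j / 2 then h.choose
  else if h2 : ∃ x, memNet E x j ∧ dist w x ≤ 2 * sc j then h2.choose
  else enum E j 0

lemma par_mem (hne : E.Nonempty) (j : ℤ) (w : X) : memNet E (par E j w) j := by
  unfold par
  split_ifs with h h2
  · exact h.choose_spec.1
  · exact h2.choose_spec.1
  · exact enum_mem E hne j 0

lemma par_eq {j : ℤ} {w x : X} (hx : memNet E x j) (hd : dist w x < sc j / 2) :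
    par E j w = x := by
  unfold par
  have h : ∃ x, memNet E x j ∧ dist w x < sc j / 2 := ⟨x, hx, hd⟩
  rw [dif_pos h]
  by_contra hne
  have h1 := h.choose_spec
  have hsep := memNet_sep E h1.1 hx hne
  have : dist h.choose x ≤ dist h.choose w + dist w x := dist_triangle _ _ _
  rw [dist_comm h.choose w] at this
  have := h1.2
  linarith

lemma par_self {j : ℤ} {w : X} (hw : memNet E w j) : par E j w = w :=
  par_eq E hw (by simpa using by linarith [sc_pos j])

lemma par_dist (hne : E.Nonempty) {j : ℤ} {w : X} (hw : w ∈ E) :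
    dist w (par E j w) ≤ 2 * sc j := by
  unfold par
  split_ifs with h h2
  · have := h.choose_spec.2
    have := sc_pos j
    linarith
  · exact h2.choose_spec.2
  · exfalso
    obtain ⟨y, hy, hd⟩ := net_cover E hw j
    exact h2 ⟨y, hy, hd⟩

/-! ### iterated ancestors -/

def anc (j : ℤ) : ℕ → X → X
  | 0, w => w
  | (t+1), w => par E (j - (t+1 : ℕ)) (anc j t w)

lemma anc_zero (j : ℤ) (w : X) : anc E j 0 w = w := rfl

lemma anc_succ (j : ℤ) (t : ℕ) (w : X) :
    anc E j (t+1) w = par E (j - (t+1 : ℕ)) (anc E j t w) := rfl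

lemma anc_mem (hne : E.Nonempty) (j : ℤ) :
    ∀ (t : ℕ) (w : X), memNet E w j → memNet E (anc E j t w) (j - t) := by
  intro t
  induction t with
  | zero => intro w hw; simpa [anc_zero] using hw
  | succ t ih =>
    intro w hw
    rw [anc_succ]
    exact par_mem E hne _ _

lemma anc_dist (hne : E.Nonempty) (j : ℤ) :
    ∀ (t : ℕ) (w : X), memNet E w j →
      dist w (anc E j t w) ≤ 3 * sc (j - t) - 3 * sc j := by
  intro t
  induction t with
  | zero => intro w hw; simp [anc_zero]
  | succ t ih =>
    intro w hw
    rw [anc_succ]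
    have h1 := ih w hw
    have h2 : dist (anc E j t w) (par E (j - (t+1:ℕ)) (anc E j t w)) ≤ 2 * sc (j - (t+1:ℕ)) :=
      par_dist E hne (memNet_mem_E E (anc_mem E hne j t w hw))
    have h3 : 32 * sc (j - t) ≤ sc (j - (t+1:ℕ)) := by
      have := sc_succ_le (j - (t+1:ℕ))
      rw [show (j - (t+1:ℕ) + 1 : ℤ) = j - t by push_cast; ring] at this
      exact this
    have h4 := sc_pos (j - t)
    calc dist w (par E (j - (t+1:ℕ)) (anc E j t w))
        ≤ dist w (anc E j t w) + dist (anc E j t w) (par E (j - (t+1:ℕ)) (anc E j t w)) :=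
          dist_triangle _ _ _
      _ ≤ (3 * sc (j - t) - 3 * sc j) + 2 * sc (j - (t+1:ℕ)) := by linarith
      _ ≤ 3 * sc (j - (t+1:ℕ)) - 3 * sc j := by linarith

lemma anc_add (j : ℤ) (t : ℕ) :
    ∀ (s : ℕ) (w : X), anc E j (t + s) w = anc E (j - t) s (anc E j t w) := by
  intro s
  induction s with
  | zero => intro w; simp [anc_zero]
  | succ s ih =>
    intro w
    rw [show t + (s+1) = (t + s) + 1 by ring, anc_succ, anc_succ, ih w]
    congr 1
    push_cast
    ring

lemma anc_id (j : ℤ) : ∀ (t : ℕ) (w : X), memNet E w (j - t) → anc E j t w = w := by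
  intro t
  induction t with
  | zero => intro w _; rfl
  | succ t ih =>
    intro w hw
    have hw' : memNet E w (j - t) := memNet_mono E (by push_cast; omega) hw
    rw [anc_succ, ih w hw']
    exact par_self E hw

/-! ### ancestors indexed by target generation -/

def AncP (m k : ℤ) (w : X) : X := anc E k (k - m).toNat w

lemma AncP_refl (m : ℤ) (w : X) : AncP E m m w = w := by
  unfold AncP
  simp [anc_zero]

lemma AncP_succ (k : ℤ) (w : X) : AncP E k (k+1) w = par E k w := by
  unfold AncP
  rw [show (k + 1 - k).toNat = 1 by omega]
  rw [anc_succ, anc_zero]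
  norm_num

lemma AncP_comp {m k j : ℤ} (h1 : m ≤ k) (h2 : k ≤ j) (w : X) :
    AncP E m k (AncP E k j w) = AncP E m j w := by
  unfold AncP
  have := anc_add E j ((j - k).toNat) ((k - m).toNat) w
  rw [show ((j - k).toNat + (k - m).toNat) = (j - m).toNat by omega] at this
  rw [show (j - ((j - k).toNat : ℤ)) = k by omega] at this
  exact this.symm

lemma AncP_mem (hne : E.Nonempty) {m k : ℤ} (h : m ≤ k) {w : X} (hw : memNet E w k) :
    memNet E (AncP E m k w) m := by
  have := anc_mem E hne k ((k - m).toNat) w hw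
  rwa [show (k - ((k - m).toNat : ℤ)) = m by omega] at this

lemma AncP_dist (hne : E.Nonempty) {m k : ℤ} (h : m ≤ k) {w : X} (hw : memNet E w k) :
    dist w (AncP E m k w) ≤ 3 * sc m - 3 * sc k := by
  have := anc_dist E hne k ((k - m).toNat) w hw
  rwa [show (k - ((k - m).toNat : ℤ)) = m by omega] at this

lemma AncP_self {m k : ℤ} (h : m ≤ k) {w : X} (hw : memNet E w m) : AncP E m k w = w := by
  unfold AncP
  exact anc_id E k _ w (by rwa [show (k - ((k - m).toNat : ℤ)) = m by omega])

/-! ### pigeonhole lemmas -/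

lemma pigeon {T : Set X} (hT : T.Finite) (gz : ℤ → X) (k : ℤ)
    (hg : ∀ j, k ≤ j → gz j ∈ T) :
    ∃ v, ∀ j₀ : ℤ, ∃ j, j₀ ≤ j ∧ k ≤ j ∧ gz j = v := by
  by_contra hc
  push_neg at hc
  choose bnd hbnd using hc
  have hTne : (hT.toFinset).Nonempty := ⟨gz k, hT.mem_toFinset.2 (hg k le_rfl)⟩
  set M := hT.toFinset.sup' hTne bnd with hM
  set j := max k M with hj
  have h1 : gz j ∈ T := hg j (le_max_left _ _)
  have h2 : bnd (gz j) ≤ M := Finset.le_sup' bnd (hT.mem_toFinset.2 h1)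
  exact hbnd (gz j) j (le_trans h2 (le_max_right _ _)) (le_max_left _ _) rfl

lemma chain_common {T : Set X} (hT : T.Finite) (S : ℤ → Set X) (t : ℤ)
    (hsub : ∀ j, t ≤ j → S j ⊆ T) (hSne : ∀ j, t ≤ j → (S j).Nonempty)
    (hmono : ∀ j j', t ≤ j → j ≤ j' → S j' ⊆ S j) :
    ∃ x, ∀ j, t ≤ j → x ∈ S j := by
  have hch : ∀ j : ℤ, ∃ x, x ∈ S (max j t) := fun j => hSne _ (le_max_right _ _)
  choose f hf using hch
  have hginT : ∀ j, t ≤ j → f j ∈ T := by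
    intro j hj
    have h := hf j
    rw [max_eq_left hj] at h
    exact hsub j hj h
  obtain ⟨v, hv⟩ := pigeon hT f t hginT
  refine ⟨v, fun j hj => ?_⟩
  obtain ⟨j', hj1, hj2, hj3⟩ := hv j
  have h := hf j'
  rw [max_eq_left hj2, hj3] at h
  exact hmono j j' hj hj1 h

/-! ### limit values of ancestors of nearby net points -/

def gsel (k j : ℤ) (z : X) : X := AncP E k j (ypt E j z)

/-- `v` is a frequent value of the ancestors (at generation `k`) of the net points
near `z`. -/
def Lmem (k : ℤ) (z v : X) : Prop := ∀ j₀ : ℤ, ∃ j, j₀ ≤ j ∧ k ≤ j ∧ gsel E k j z = v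

lemma gsel_mem (hne : E.Nonempty) {k j : ℤ} (h : k ≤ j) (z : X) :
    memNet E (gsel E k j z) k :=
  AncP_mem E hne h (ypt_mem E hne j z)

lemma gsel_dist (hne : E.Nonempty) {z : X} (hz : z ∈ E) {k j : ℤ} (h : k ≤ j) :
    dist z (gsel E k j z) ≤ 3 * sc k - sc j := by
  have h1 := ypt_dist E hne hz j
  have h2 := AncP_dist E hne h (ypt_mem E hne j z)
  calc dist z (gsel E k j z) ≤ dist z (ypt E j z) + dist (ypt E j z) (gsel E k j z) :=
        dist_triangle _ _ _
    _ ≤ 2 * sc j + (3 * sc k - 3 * sc j) := by exact add_le_add h1 h2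
    _ = 3 * sc k - sc j := by ring

lemma Lmem_net (hne : E.Nonempty) {k : ℤ} {z v : X} (h : Lmem E k z v) :
    memNet E v k := by
  obtain ⟨j, _, hkj, hg⟩ := h k
  rw [← hg]
  exact gsel_mem E hne hkj z

lemma Lmem_dist (hne : E.Nonempty) {z : X} (hz : z ∈ E) {k : ℤ} {v : X}
    (h : Lmem E k z v) : dist z v ≤ 3 * sc k := by
  obtain ⟨j, _, hkj, hg⟩ := h k
  have := gsel_dist E hne hz hkj
  rw [hg] at this
  linarith [sc_pos j]

lemma Lmem_anc (hne : E.Nonempty) {m k : ℤ} (hmk : m ≤ k) {z v : X}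
    (h : Lmem E k z v) : Lmem E m z (AncP E m k v) := by
  intro j₀
  obtain ⟨j, hj1, hj2, hj3⟩ := h (max j₀ k)
  have hkj : k ≤ j := le_trans (le_max_right _ _) hj1
  refine ⟨j, le_trans (le_max_left _ _) hj1, le_trans hmk hkj, ?_⟩
  show AncP E m j (ypt E j z) = AncP E m k v
  rw [← hj3]
  exact (AncP_comp E hmk hkj _).symm

lemma Lmem_ex (hne : E.Nonempty) {z : X} (hz : z ∈ E) (k : ℤ) :
    ∃ v, Lmem E k z v := by
  apply pigeon (net_finite E k (z := z) (R := 3 * sc k)) (fun j => gsel E k j z) k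
  intro j hj
  constructor
  · rw [mem_closedBall, dist_comm]
    have := gsel_dist E hne hz hj
    linarith [sc_pos j]
  · exact gsel_mem E hne hj z

/-- `w` (a net point of generation `t`) has frequent descendants at every finer
generation. -/
def Ext (t : ℤ) (w z : X) : Prop := ∀ j, t ≤ j → ∃ v, Lmem E j z v ∧ AncP E t j v = w

lemma exists_ext (hne : E.Nonempty) {z : X} (hz : z ∈ E) (t : ℤ) :
    ∃ w, Lmem E t z w ∧ Ext E t w z := by
  set S : ℤ → Set X := fun j => {x | ∃ v, Lmem E j z v ∧ AncP E t j v = x} with hS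
  have hsub : ∀ j, t ≤ j → S j ⊆ closedBall z (3 * sc t) ∩ Net E t := by
    rintro j hj x ⟨v, hv, hvx⟩
    have hvnet := Lmem_net E hne hv
    constructor
    · rw [mem_closedBall, dist_comm]
      have h1 := Lmem_dist E hne hz hv
      have h2 := AncP_dist E hne hj hvnet
      rw [hvx] at h2
      have h3 : dist z x ≤ dist z v + dist v x := dist_triangle _ _ _
      linarith [sc_pos j]
    · rw [← hvx]
      exact AncP_mem E hne hj hvnet
  have hSne : ∀ j, t ≤ j → (S j).Nonempty := by
    intro j hj
    obtain ⟨v, hv⟩ := Lmem_ex E hne hz j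
    exact ⟨AncP E t j v, v, hv, rfl⟩
  have hmono : ∀ j j', t ≤ j → j ≤ j' → S j' ⊆ S j := by
    rintro j j' hj hjj' x ⟨v, hv, hvx⟩
    refine ⟨AncP E j j' v, Lmem_anc E hne hjj' hv, ?_⟩
    rw [AncP_comp E hj hjj', hvx]
  obtain ⟨x, hx⟩ := chain_common (net_finite E t) S t hsub hSne hmono
  obtain ⟨v, hv, hvx⟩ := hx t le_rfl
  rw [AncP_refl] at hvx
  subst hvx
  refine ⟨v, hv, fun j hj => hx j hj⟩

lemma exists_ext_succ (hne : E.Nonempty) {z : X} (hz : z ∈ E) (t : ℤ) {w : X}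
    (hw : Ext E t w z) :
    ∃ w', Lmem E (t+1) z w' ∧ par E t w' = w ∧ Ext E (t+1) w' z := by
  set S : ℤ → Set X :=
    fun j => {x | ∃ v, Lmem E j z v ∧ AncP E (t+1) j v = x ∧ par E t x = w} with hS
  have hsub : ∀ j, t+1 ≤ j → S j ⊆ closedBall z (3 * sc (t+1)) ∩ Net E (t+1) := by
    rintro j hj x ⟨v, hv, hvx, _⟩
    have hvnet := Lmem_net E hne hv
    constructor
    · rw [mem_closedBall, dist_comm]
      have h1 := Lmem_dist E hne hz hv
      have h2 := AncP_dist E hne hj hvnet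
      rw [hvx] at h2
      have h3 : dist z x ≤ dist z v + dist v x := dist_triangle _ _ _
      linarith [sc_pos j]
    · rw [← hvx]
      exact AncP_mem E hne hj hvnet
  have hSne : ∀ j, t+1 ≤ j → (S j).Nonempty := by
    intro j hj
    obtain ⟨v, hv, hvw⟩ := hw j (by omega)
    refine ⟨AncP E (t+1) j v, v, hv, rfl, ?_⟩
    rw [← AncP_succ, AncP_comp E (by omega : t ≤ t+1) hj, hvw]
  have hmono : ∀ j j', t+1 ≤ j → j ≤ j' → S j' ⊆ S j := by
    rintro j j' hj hjj' x ⟨v, hv, hvx, hpar⟩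
    refine ⟨AncP E j j' v, Lmem_anc E hne hjj' hv, ?_, hpar⟩
    rw [AncP_comp E hj hjj', hvx]
  obtain ⟨x, hx⟩ := chain_common (net_finite E (t+1)) S (t+1) hsub hSne hmono
  obtain ⟨v, hv, hvx, hpar⟩ := hx (t+1) le_rfl
  rw [AncP_refl] at hvx
  subst hvx
  refine ⟨v, hv, hpar, fun j hj => ?_⟩
  obtain ⟨v', hv', hv'x, _⟩ := hx j hj
  exact ⟨v', hv', hv'x⟩

/-! ### the branch selection -/

def ib : ℕ → X → ℕ
  | 0 => fun z => pick (fun i => Lmem E 0 z (enum E 0 i) ∧ Ext E 0 (enum E 0 i) z)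
  | (t+1) => fun z => pick (fun i => Lmem E ((t:ℤ)+1) z (enum E ((t:ℤ)+1) i) ∧
      par E (t:ℤ) (enum E ((t:ℤ)+1) i) = enum E (t:ℤ) (ib t z) ∧
      Ext E ((t:ℤ)+1) (enum E ((t:ℤ)+1) i) z)

def bpt (t : ℕ) (z : X) : X := enum E (t:ℤ) (ib E t z)

lemma bpt_zero_def (z : X) : bpt E 0 z = enum E 0 (ib E 0 z) := by
  unfold bpt; norm_num

lemma bpt_succ_def (t : ℕ) (z : X) :
    bpt E (t+1) z = enum E ((t:ℤ)+1) (ib E (t+1) z) := by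
  unfold bpt; push_cast; ring_nf

lemma bpt_good (hne : E.Nonempty) {z : X} (hz : z ∈ E) :
    ∀ t : ℕ, Lmem E (t:ℤ) z (bpt E t z) ∧ Ext E (t:ℤ) (bpt E t z) z := by
  intro t
  induction t with
  | zero =>
    obtain ⟨w, hw1, hw2⟩ := exists_ext E hne hz 0
    obtain ⟨i, hi⟩ := mem_enum E hne (Lmem_net E hne hw1)
    have hex : ∃ i, Lmem E 0 z (enum E 0 i) ∧ Ext E 0 (enum E 0 i) z :=
      ⟨i, by rw [hi]; exact ⟨hw1, hw2⟩⟩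
    have h := pick_spec hex
    rw [bpt_zero_def]
    push_cast
    exact h
  | succ t ih =>
    obtain ⟨w', hw1, hw2, hw3⟩ := exists_ext_succ E hne hz (t:ℤ) ih.2
    obtain ⟨i, hi⟩ := mem_enum E hne (Lmem_net E hne hw1)
    have hex : ∃ i, Lmem E ((t:ℤ)+1) z (enum E ((t:ℤ)+1) i) ∧
        par E (t:ℤ) (enum E ((t:ℤ)+1) i) = enum E (t:ℤ) (ib E t z) ∧
        Ext E ((t:ℤ)+1) (enum E ((t:ℤ)+1) i) z :=
      ⟨i, by rw [hi]; exact ⟨hw1, hw2, hw3⟩⟩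
    have h := pick_spec hex
    rw [bpt_succ_def]
    push_cast
    exact ⟨h.1, h.2.2⟩

lemma bpt_par (hne : E.Nonempty) {z : X} (hz : z ∈ E) (t : ℕ) :
    par E (t:ℤ) (bpt E (t+1) z) = bpt E t z := by
  obtain ⟨w', hw1, hw2, hw3⟩ := exists_ext_succ E hne hz (t:ℤ) (bpt_good E hne hz t).2
  obtain ⟨i, hi⟩ := mem_enum E hne (Lmem_net E hne hw1)
  have hex : ∃ i, Lmem E ((t:ℤ)+1) z (enum E ((t:ℤ)+1) i) ∧
      par E (t:ℤ) (enum E ((t:ℤ)+1) i) = enum E (t:ℤ) (ib E t z) ∧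
      Ext E ((t:ℤ)+1) (enum E ((t:ℤ)+1) i) z :=
    ⟨i, by rw [hi]; exact ⟨hw1, hw2, hw3⟩⟩
  have h := pick_spec hex
  rw [bpt_succ_def]
  exact h.2.1

/-! ### the cube assignment at every generation -/

def Bpt (k : ℤ) (z : X) : X := AncP E k (max k 0) (bpt E (max k 0).toNat z)

lemma Bpt_of_nonneg {k : ℤ} (h : 0 ≤ k) (z : X) : Bpt E k z = bpt E k.toNat z := by
  unfold Bpt
  rw [max_eq_left h]
  have : (k - k).toNat = 0 := by omega
  unfold AncP
  rw [this, anc_zero]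

lemma Bpt_of_neg {k : ℤ} (h : k ≤ 0) (z : X) : Bpt E k z = AncP E k 0 (bpt E 0 z) := by
  unfold Bpt
  rw [max_eq_right h]
  rfl

lemma Bpt_mem_L (hne : E.Nonempty) {z : X} (hz : z ∈ E) (k : ℤ) :
    Lmem E k z (Bpt E k z) := by
  rcases le_or_gt 0 k with h | h
  · rw [Bpt_of_nonneg E h]
    have := (bpt_good E hne hz k.toNat).1
    rwa [show ((k.toNat : ℕ) : ℤ) = k by omega] at this
  · rw [Bpt_of_neg E (le_of_lt h)]
    have := Lmem_anc E hne (le_of_lt h) ((bpt_good E hne hz 0).1)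
    simpa using this

lemma Bpt_net (hne : E.Nonempty) {z : X} (hz : z ∈ E) (k : ℤ) :
    memNet E (Bpt E k z) k :=
  Lmem_net E hne (Bpt_mem_L E hne hz k)

lemma Bpt_dist (hne : E.Nonempty) {z : X} (hz : z ∈ E) (k : ℤ) :
    dist z (Bpt E k z) ≤ 3 * sc k :=
  Lmem_dist E hne hz (Bpt_mem_L E hne hz k)

lemma Bpt_step (hne : E.Nonempty) {z : X} (hz : z ∈ E) (k : ℤ) :
    par E k (Bpt E (k+1) z) = Bpt E k z := by
  rcases le_or_gt 0 k with h | h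
  · rw [Bpt_of_nonneg E (by omega : (0:ℤ) ≤ k+1), Bpt_of_nonneg E h]
    have hb := bpt_par E hne hz k.toNat
    rw [show (k+1).toNat = k.toNat + 1 by omega]
    rwa [show ((k.toNat : ℕ) : ℤ) = k by omega] at hb
  · rw [Bpt_of_neg E (by omega : k + 1 ≤ 0), Bpt_of_neg E (le_of_lt h)]
    rw [← AncP_succ]
    exact AncP_comp E (by omega) (by omega) _

lemma Bpt_anc (hne : E.Nonempty) {z : X} (hz : z ∈ E) :
    ∀ (t : ℕ) (m k : ℤ), m ≤ k → (k - m).toNat = t →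
      AncP E m k (Bpt E k z) = Bpt E m z := by
  intro t
  induction t with
  | zero =>
    intro m k h1 h2
    have : m = k := by omega
    subst this
    exact AncP_refl E m _
  | succ t ih =>
    intro m k h1 h2
    have hmk : m + 1 ≤ k := by omega
    rw [← AncP_comp E (by omega : m ≤ m + 1) hmk]
    rw [ih (m+1) k hmk (by omega)]
    rw [AncP_succ]
    exact Bpt_step E hne hz m

lemma Bpt_consistent (hne : E.Nonempty) {z : X} (hz : z ∈ E) {m k : ℤ} (h : m ≤ k) :
    AncP E m k (Bpt E k z) = Bpt E m z :=
  Bpt_anc E hne hz (k - m).toNat m k h rfl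

/-! ### the key ball property -/

lemma Bpt_ball (hne : E.Nonempty) {z x : X} (hz : z ∈ E) {j : ℤ}
    (hx : memNet E x j) (hd : dist z x < sc j / 4) : Bpt E j z = x := by
  have hwL : Lmem E (j+1) z (Bpt E (j+1) z) := Bpt_mem_L E hne hz (j+1)
  have hw1 : dist z (Bpt E (j+1) z) ≤ 3 * sc (j+1) := Lmem_dist E hne hz hwL
  have hsc : 32 * sc (j+1) ≤ sc j := sc_succ_le j
  have hpos := sc_pos (j+1)
  have hwx : dist (Bpt E (j+1) z) x < sc j / 2 := by
    calc dist (Bpt E (j+1) z) x ≤ dist (Bpt E (j+1) z) z + dist z x := dist_triangle _ _ _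
      _ < 3 * sc (j+1) + sc j / 4 := by rw [dist_comm]; linarith
      _ ≤ sc j / 2 := by linarith
  rw [← Bpt_step E hne hz j]
  exact par_eq E hx hwx

lemma Bpt_self (hne : E.Nonempty) {x : X} {j : ℤ} (hx : memNet E x j) :
    Bpt E j x = x :=
  Bpt_ball E hne (memNet_mem_E E hx) hx (by simpa using by linarith [sc_pos j])

/-! ### measurability -/

section Measurability

variable [MeasurableSpace X] [BorelSpace X]

lemma measurable_pick {P : ℕ → X → Prop} (h : ∀ i, MeasurableSet {z | P i z}) :
    Measurable (fun z => pick (fun i => P i z)) := by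
  apply measurable_to_countable'
  intro i
  have heq : (fun z => pick (fun i => P i z)) ⁻¹' {i} =
      ({z | P i z} ∩ ⋂ j ∈ Finset.range i, {z | P j z}ᶜ) ∪
        (⋃ (_ : i = 0), ⋂ (j : ℕ), {z | P j z}ᶜ) := by
    ext z
    simp only [Set.mem_preimage, Set.mem_singleton_iff, pick_eq_iff, Set.mem_union,
      Set.mem_inter_iff, Set.mem_iUnion, Set.mem_iInter, Set.mem_compl_iff,
      Set.mem_setOf_eq, Finset.mem_range]
    tauto
  rw [heq]
  refine MeasurableSet.union ?_ ?_
  · exact (h i).inter (MeasurableSet.biInter (Set.to_countable _) (fun j _ => (h j).compl))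
  · exact MeasurableSet.iUnion (fun _ => MeasurableSet.iInter (fun j => (h j).compl))

lemma measurable_iy (k : ℤ) : Measurable (iy E k) := by
  apply measurable_pick
  intro i
  have : {z : X | dist z (enum E k i) ≤ 2 * sc k} = closedBall (enum E k i) (2 * sc k) := rfl
  rw [this]
  exact measurableSet_closedBall

lemma measurable_gsel_fiber (k j : ℤ) (S : Set X) :
    MeasurableSet {z | gsel E k j z ∈ S} := by
  have : {z | gsel E k j z ∈ S} = iy E j ⁻¹' {i | AncP E k j (enum E j i) ∈ S} := rfl
  rw [this]
  exact measurable_iy E j (by trivial)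

lemma measurable_Lmem (k : ℤ) (v : X) : MeasurableSet {z | Lmem E k z v} := by
  have : {z | Lmem E k z v} =
      ⋂ (j₀ : ℤ), ⋃ (j : ℤ), ⋃ (_ : j₀ ≤ j), ⋃ (_ : k ≤ j), {z | gsel E k j z = v} := by
    ext z
    simp only [Set.mem_iInter, Set.mem_iUnion, Set.mem_setOf_eq, exists_prop]
    exact Iff.rfl
  rw [this]
  refine MeasurableSet.iInter (fun j₀ => MeasurableSet.iUnion (fun j =>
    MeasurableSet.iUnion (fun _ => MeasurableSet.iUnion (fun _ => ?_))))
  exact measurable_gsel_fiber E k j {v}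

lemma Ext_iff (hne : E.Nonempty) (t : ℤ) (w z : X) :
    Ext E t w z ↔ ∀ j, t ≤ j →
      ∃ i : ℕ, Lmem E j z (enum E j i) ∧ AncP E t j (enum E j i) = w := by
  constructor
  · intro h j hj
    obtain ⟨v, hv, hvw⟩ := h j hj
    obtain ⟨i, hi⟩ := mem_enum E hne (Lmem_net E hne hv)
    exact ⟨i, by rw [hi]; exact hv, by rw [hi]; exact hvw⟩
  · intro h j hj
    obtain ⟨i, h1, h2⟩ := h j hj
    exact ⟨enum E j i, h1, h2⟩

lemma measurable_Ext (hne : E.Nonempty) (t : ℤ) (w : X) :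
    MeasurableSet {z | Ext E t w z} := by
  have : {z | Ext E t w z} =
      ⋂ (j : ℤ), ⋂ (_ : t ≤ j), ⋃ (i : ℕ), ⋃ (_ : AncP E t j (enum E j i) = w),
        {z | Lmem E j z (enum E j i)} := by
    ext z
    simp only [Set.mem_iInter, Set.mem_iUnion, Set.mem_setOf_eq]
    rw [Ext_iff E hne]
    constructor
    · intro h j hj
      obtain ⟨i, h1, h2⟩ := h j hj
      exact ⟨i, h2, h1⟩
    · intro h j hj
      obtain ⟨i, h1, h2⟩ := h j hj
      exact ⟨i, h2, h1⟩
  rw [this]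
  refine MeasurableSet.iInter (fun j => MeasurableSet.iInter (fun _ =>
    MeasurableSet.iUnion (fun i => MeasurableSet.iUnion (fun _ => ?_))))
  exact measurable_Lmem E j (enum E j i)

lemma measurable_ib (hne : E.Nonempty) : ∀ t : ℕ, Measurable (ib E t) := by
  intro t
  induction t with
  | zero =>
    apply measurable_pick
    intro i
    exact (measurable_Lmem E 0 (enum E 0 i)).inter (measurable_Ext E hne 0 (enum E 0 i))
  | succ t ih =>
    apply measurable_pick
    intro i
    have h2 : MeasurableSet {z : X | par E (t:ℤ) (enum E ((t:ℤ)+1) i) = enum E (t:ℤ) (ib E t z)} := by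
      have heq : {z : X | par E (t:ℤ) (enum E ((t:ℤ)+1) i) = enum E (t:ℤ) (ib E t z)} =
          ib E t ⁻¹' {m | par E (t:ℤ) (enum E ((t:ℤ)+1) i) = enum E (t:ℤ) m} := rfl
      rw [heq]
      exact ih (by trivial)
    exact ((measurable_Lmem E _ _).inter (h2.inter (measurable_Ext E hne _ _)))

lemma measurable_Bpt_fiber (hne : E.Nonempty) (k : ℤ) (S : Set X) :
    MeasurableSet {z | Bpt E k z ∈ S} := by
  have : {z | Bpt E k z ∈ S} =
      ib E (max k 0).toNat ⁻¹'
        {m | AncP E k (max k 0) (enum E ((max k 0).toNat : ℤ) m) ∈ S} := rfl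
  rw [this]
  exact measurable_ib E hne (max k 0).toNat (by trivial)

end Measurability

lemma sc_eq_two_zpow (j : ℤ) : sc j = (2:ℝ) ^ (-(5*j)) := by
  unfold sc
  rw [show (32:ℝ) = (2:ℝ)^(5:ℤ) by norm_num, ← zpow_mul]
  ring_nf

end DyadicGridCD

open DyadicGridCD

/-- **Existence of a dyadic grid on a closed subset of `ℝ^{n+1}`** (Lemma 2.11 /
`lemma:dyadiccubes` of the paper).  For `n ≥ 2` and `E ⊆ ℝ^{n+1}` closed, there is a
constant `C ≥ 1`, depending only on `n`, such that for each `k ∈ ℤ` there is a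
collection `𝔻 k` of Borel subsets of `E` ("cubes") satisfying:
(a) for each `k`, `E` is the disjoint union of the cubes of `𝔻 k`;
(b) if `m ≤ k`, `Q ∈ 𝔻 k` and `Q' ∈ 𝔻 m`, then `Q ⊆ Q'` or `Q' ∩ Q = ∅`;
(c) for each `k`, `Q ∈ 𝔻 k` and `m < k` there is a unique `Q' ∈ 𝔻 m` with `Q ⊆ Q'`;
(d) each `Q ∈ 𝔻 k` contains `B(x,C⁻¹2^{-k}) ∩ E` and is contained in
    `B(x,C·2^{-k}) ∩ E` for some `x ∈ E`. -/
theorem dyadic_grid_existence (n : ℕ) (hn : 2 ≤ n) :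
    ∃ C : ℝ, 1 ≤ C ∧
      ∀ E : Set (EuclideanSpace ℝ (Fin (n + 1))), IsClosed E →
        ∃ 𝔻 : ℤ → Set (Set (EuclideanSpace ℝ (Fin (n + 1)))),
          (∀ k : ℤ, (𝔻 k).Countable) ∧
          (∀ k : ℤ, ∀ Q ∈ 𝔻 k, MeasurableSet Q ∧ Q ⊆ E) ∧
          -- (a) each generation covers `E` and consists of pairwise disjoint cubes
          (∀ k : ℤ, ⋃₀ 𝔻 k = E) ∧
          (∀ k : ℤ, (𝔻 k).PairwiseDisjoint id) ∧
          -- (b) nesting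
          (∀ k m : ℤ, m ≤ k → ∀ Q ∈ 𝔻 k, ∀ Q' ∈ 𝔻 m, Q ⊆ Q' ∨ Q' ∩ Q = ∅) ∧
          -- (c) unique ancestors
          (∀ k m : ℤ, m < k → ∀ Q ∈ 𝔻 k, ∃! Q', Q' ∈ 𝔻 m ∧ Q ⊆ Q') ∧
          -- (d) cubes are comparable to surface balls
          (∀ k : ℤ, ∀ Q ∈ 𝔻 k, ∃ x ∈ E,
            ball x (C⁻¹ * 2 ^ (-k)) ∩ E ⊆ Q ∧ Q ⊆ ball x (C * 2 ^ (-k)) ∩ E) := by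
  classical
  refine ⟨64, by norm_num, ?_⟩
  intro E hE
  by_cases hne : E.Nonempty
  swap
  · -- the empty case
    rw [Set.not_nonempty_iff_eq_empty] at hne
    subst hne
    refine ⟨fun _ => ∅, by simp, by simp, by simp, by simp, by simp, by simp, by simp⟩
  · set f : ℤ → ℤ := fun k => (k + 4) / 5 with hf
    have hf1 : ∀ k, k ≤ 5 * f k := fun k => by simp only [hf]; omega
    have hf2 : ∀ k, 5 * f k ≤ k + 4 := fun k => by simp only [hf]; omega
    have hfmono : ∀ {m k : ℤ}, m ≤ k → f m ≤ f k := fun {m k} h => by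
      simp only [hf]; omega
    -- scale comparisons
    have hsc_up : ∀ k : ℤ, sc (f k) ≤ (2:ℝ) ^ (-k) := by
      intro k
      rw [sc_eq_two_zpow]
      exact zpow_le_zpow_right₀ (by norm_num) (by have := hf1 k; omega)
    have hsc_lo : ∀ k : ℤ, (64:ℝ)⁻¹ * 2 ^ (-k) ≤ sc (f k) / 4 := by
      intro k
      have h1 : (64:ℝ)⁻¹ * 2 ^ (-k:ℤ) = (2:ℝ) ^ (-(k+6)) := by
        rw [show (-(k+6) : ℤ) = (-k) + (-6) by ring, zpow_add₀ (by norm_num : (2:ℝ) ≠ 0)]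
        norm_num
        ring
      have h2 : sc (f k) / 4 = (2:ℝ) ^ (-(5 * f k + 2)) := by
        rw [sc_eq_two_zpow, show (-(5 * f k + 2) : ℤ) = (-(5 * f k)) + (-2) by ring,
          zpow_add₀ (by norm_num : (2:ℝ) ≠ 0)]
        norm_num
        ring
      rw [h1, h2]
      exact zpow_le_zpow_right₀ (by norm_num) (by have := hf2 k; omega)
    -- the cubes
    set Q : ℤ → EuclideanSpace ℝ (Fin (n+1)) → Set (EuclideanSpace ℝ (Fin (n+1))) :=
      fun k x => E ∩ {z | Bpt E (f k) z = x} with hQ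
    refine ⟨fun k => Q k '' (Net E (f k)), ?_, ?_, ?_, ?_, ?_, ?_, ?_⟩
    · intro k
      exact (net_countable E (f k)).image _
    · rintro k _ ⟨x, hx, rfl⟩
      refine ⟨hE.measurableSet.inter ?_, Set.inter_subset_left⟩
      exact measurable_Bpt_fiber E hne (f k) {x}
    · intro k
      apply Set.Subset.antisymm
      · rintro z ⟨_, ⟨x, hx, rfl⟩, hz⟩
        exact hz.1
      · intro z hz
        exact ⟨Q k (Bpt E (f k) z), ⟨Bpt E (f k) z, Bpt_net E hne hz (f k), rfl⟩,
          hz, rfl⟩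
    · intro k
      rintro _ ⟨x, hx, rfl⟩ _ ⟨x', hx', rfl⟩ hQne
      rw [Function.onFun, Set.disjoint_left]
      rintro z ⟨hzE, hzx⟩ ⟨_, hzx'⟩
      exact hQne (by rw [show x = x' from hzx.symm.trans hzx'])
    · rintro k m hmk _ ⟨x, hx, rfl⟩ _ ⟨x', hx', rfl⟩
      have hj : f m ≤ f k := hfmono hmk
      by_cases hanc : AncP E (f m) (f k) x = x'
      · left
        rintro z ⟨hzE, hzx⟩
        refine ⟨hzE, ?_⟩
        show Bpt E (f m) z = x'
        rw [← Bpt_consistent E hne hzE hj, hzx, hanc]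
      · right
        rw [Set.eq_empty_iff_forall_notMem]
        rintro z ⟨⟨hzE, hzx'⟩, ⟨_, hzx⟩⟩
        apply hanc
        rw [← hzx, ← hzx']
        exact Bpt_consistent E hne hzE hj
    · rintro k m hmk _ ⟨x, hx, rfl⟩
      have hj : f m ≤ f k := hfmono (le_of_lt hmk)
      have hxE : x ∈ E := memNet_mem_E E hx
      have hxQ : x ∈ Q k x := ⟨hxE, Bpt_self E hne hx⟩
      refine ⟨Q m (AncP E (f m) (f k) x),
        ⟨⟨AncP E (f m) (f k) x, AncP_mem E hne hj hx, rfl⟩, ?_⟩, ?_⟩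
      · rintro z ⟨hzE, hzx⟩
        refine ⟨hzE, ?_⟩
        show Bpt E (f m) z = AncP E (f m) (f k) x
        rw [← hzx]
        exact (Bpt_consistent E hne hzE hj).symm
      · rintro _ ⟨⟨x'', hx'', rfl⟩, hsub⟩
        have hxQ'' := hsub hxQ
        have : Bpt E (f m) x = x'' := hxQ''.2
        rw [← this]
        have : Bpt E (f m) x = AncP E (f m) (f k) x := by
          rw [← Bpt_consistent E hne hxE hj, Bpt_self E hne hx]
        rw [this]
    · rintro k _ ⟨x, hx, rfl⟩
      have hxE : x ∈ E := memNet_mem_E E hx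
      refine ⟨x, hxE, ?_, ?_⟩
      · rintro z ⟨hzb, hzE⟩
        refine ⟨hzE, ?_⟩
        show Bpt E (f k) z = x
        apply Bpt_ball E hne hzE hx
        rw [mem_ball] at hzb
        calc dist z x < (64:ℝ)⁻¹ * 2 ^ (-k) := hzb
          _ ≤ sc (f k) / 4 := hsc_lo k
      · rintro z ⟨hzE, hzx⟩
        refine ⟨?_, hzE⟩
        rw [mem_ball]
        have h1 : dist z (Bpt E (f k) z) ≤ 3 * sc (f k) := Bpt_dist E hne hzE (f k)
        rw [hzx] at h1
        have h2 := hsc_up k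
        have h3 : (0:ℝ) < 2 ^ (-k) := by positivity
        calc dist z x ≤ 3 * sc (f k) := h1
          _ ≤ 3 * 2 ^ (-k) := by linarith
          _ < 64 * 2 ^ (-k) := by linarith
end
end

section
/- Let E ⊆ ℝ^{n+1}, let 𝔻 = ⋃_{k∈ℤ} 𝔻_k be a dyadic grid on E, and fix Q⁰ which is either E or a cube of 𝔻. Let μ be a nonnegative Borel measure on Q⁰ with 0 < μ(Q) < ∞ for every Q ∈ 𝔻_{Q⁰}. Then for every pair of sequences of real numbers α = {α_Q}_{Q ∈ 𝔻_{Q⁰}} and β = {β_Q}_{Q ∈ 𝔻_{Q⁰}}, one has ∑_{Q ∈ 𝔻_{Q⁰}} |α_Q β_Q| ≤ 4 ∫_{Q⁰} 𝒜^μ_{Q⁰}α(x) ℬ^μ_{Q⁰}β(x) dμ(x). -/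
open Metric MeasureTheory
open scoped ENNReal

section TentAuxSection
open Metric MeasureTheory Set
open scoped ENNReal Classical

set_option linter.unusedSectionVars false
set_option linter.unusedVariables false

namespace TentAux

variable {X : Type*} [MeasurableSpace X]

noncomputable def c2 (μ : Measure X) (α : Set X → ℝ) (Q : Set X) : ℝ≥0∞ :=
  ENNReal.ofReal (α Q ^ 2) / μ Q

noncomputable def Tsum (D : Set (Set X)) (μ : Measure X) (α : Set X → ℝ) (Q : Set X) : ℝ≥0∞ :=
  ∑' P : {P // P ∈ D ∧ Q ⊆ P}, c2 μ α P.1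

noncomputable def Uq (D : Set (Set X)) (μ : Measure X) (α : Set X → ℝ) (Q : Set X) : ℝ≥0∞ :=
  (Tsum D μ α Q) ^ (1/2 : ℝ)

noncomputable def Ssum (D : Set (Set X)) (β : Set X → ℝ) (Q : Set X) : ℝ≥0∞ :=
  ∑' Q' : {Q' // Q' ∈ D ∧ Q' ⊆ Q}, ENNReal.ofReal (β Q'.1 ^ 2)

noncomputable def Vq (D : Set (Set X)) (μ : Measure X) (β : Set X → ℝ) (Q : Set X) : ℝ≥0∞ :=
  ⨆ P ∈ D, ⨆ _ : Q ⊆ P, (Ssum D β P / μ P) ^ (1/2 : ℝ)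

noncomputable def A2 (D : Set (Set X)) (μ : Measure X) (α : Set X → ℝ) (x : X) : ℝ≥0∞ :=
  ∑' Q : {Q // Q ∈ D ∧ x ∈ Q}, ENNReal.ofReal (α Q.1 ^ 2) / μ Q.1

noncomputable def Af (D : Set (Set X)) (μ : Measure X) (α : Set X → ℝ) (x : X) : ℝ≥0∞ :=
  (A2 D μ α x) ^ (1/2 : ℝ)

noncomputable def Bf (D : Set (Set X)) (μ : Measure X) (β : Set X → ℝ) (x : X) : ℝ≥0∞ :=
  ⨆ Q ∈ D, ⨆ _ : x ∈ Q, (Ssum D β Q / μ Q) ^ (1/2 : ℝ)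

/-! ### elementary ENNReal lemmas -/

lemma two_mul_le_sq_add (a b : ℝ≥0∞) : 2*(a*b) ≤ a^2 + b^2 := by
  rcases le_total a b with h|h
  · obtain ⟨d, rfl⟩ := exists_add_of_le h
    calc 2*(a*(a+d)) = 2*a^2 + 2*(a*d) := by ring
    _ ≤ (2*a^2 + 2*(a*d)) + d^2 := le_self_add
    _ = a^2 + (a+d)^2 := by ring
  · obtain ⟨d, rfl⟩ := exists_add_of_le h
    calc 2*((b+d)*b) = 2*b^2 + 2*(b*d) := by ring
    _ ≤ (2*b^2 + 2*(b*d)) + d^2 := le_self_add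
    _ = (b+d)^2 + b^2 := by ring

lemma sqrt_sq (z : ℝ≥0∞) : (z ^ (1/2:ℝ))^2 = z := by
  rw [← ENNReal.rpow_natCast (z ^ (1/2:ℝ)) 2, ← ENNReal.rpow_mul]
  norm_num

lemma sq_sqrt' (z : ℝ≥0∞) : (z^2) ^ (1/2:ℝ) = z := by
  rw [← ENNReal.rpow_natCast z 2, ← ENNReal.rpow_mul]
  norm_num

lemma enn_step (u' u c : ℝ≥0∞) (h : u'^2 + c ≤ u^2) : 2*u' + c/u ≤ 2*u := by
  rcases eq_or_ne u ⊤ with rfl|hu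
  · refine le_top.trans_eq ?_
    simp
  rcases eq_or_ne u 0 with rfl|hu0
  · have h2 : u'^2 + c ≤ 0 := by simpa using h
    have h3 : u'^2 = 0 := le_antisymm (le_trans le_self_add h2) (zero_le)
    have hu' : u' = 0 := by simpa [pow_eq_zero_iff] using h3
    have hc : c = 0 := le_antisymm (le_trans le_add_self h2) (zero_le)
    simp [hu', hc]
  · rw [← ENNReal.mul_le_mul_iff_left hu0 hu, add_mul, ENNReal.div_mul_cancel hu0 hu]
    calc 2*u'*u + c = 2*(u'*u) + c := by ring
    _ ≤ (u'^2 + u^2) + c := add_le_add_left (two_mul_le_sq_add u' u) c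
    _ = (u'^2 + c) + u^2 := by ring
    _ ≤ u^2 + u^2 := add_le_add_left h _
    _ = 2*u*u := by ring

/-! ### reindexing lemmas -/

lemma tsum_set (s : Set (Set X)) (f : Set X → ℝ≥0∞) :
    ∑' Q : s, f Q.1 = ∑' Q : Set X, s.indicator f Q :=
  tsum_subtype s f

lemma tsum_and (D : Set (Set X)) (p : Set X → Prop) (f : Set X → ℝ≥0∞) :
    ∑' Q : {Q // Q ∈ D ∧ p Q}, f Q.1
      = ∑' Q : {Q // Q ∈ D}, if p Q.1 then f Q.1 else 0 := by
  have h1 : ∑' Q : {Q // Q ∈ D ∧ p Q}, f Q.1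
      = ∑' Q : Set X, ({Q | Q ∈ D ∧ p Q}).indicator f Q := tsum_subtype _ f
  have h2 : ∑' Q : {Q // Q ∈ D}, (if p Q.1 then f Q.1 else 0)
      = ∑' Q : Set X, D.indicator (fun Q => if p Q then f Q else 0) Q :=
    tsum_subtype D (fun Q => if p Q then f Q else 0)
  rw [h1, h2]
  refine tsum_congr fun Q => ?_
  by_cases hD : Q ∈ D <;> by_cases hp : p Q <;>
    simp [Set.indicator, hD, hp]

lemma tsum_set_mono {s t : Set (Set X)} (h : s ⊆ t) (f : Set X → ℝ≥0∞) :
    ∑' Q : s, f Q.1 ≤ ∑' Q : t, f Q.1 := by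
  rw [tsum_set, tsum_set]
  exact Summable.tsum_le_tsum (fun Q => indicator_le_indicator_of_subset h (fun _ => zero_le) Q)
    ENNReal.summable ENNReal.summable

lemma indicator_insert_tsum {γ : Type*} (s : Set γ) (a : γ) (ha : a ∉ s) (f : γ → ℝ≥0∞) :
    ∑' x : γ, (insert a s).indicator f x = f a + ∑' x : γ, s.indicator f x := by
  have h : ∀ x, (insert a s).indicator f x
      = ({a} : Set γ).indicator f x + s.indicator f x := by
    intro x
    rcases eq_or_ne x a with rfl|hxa
    · simp [Set.indicator, ha]
    · by_cases hxs : x ∈ s <;> simp [Set.indicator, hxa, hxs]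
  rw [tsum_congr h, Summable.tsum_add ENNReal.summable ENNReal.summable,
    tsum_eq_single a (fun b hb => Set.indicator_of_notMem (by simp [hb]) f)]
  simp

/-! ### monotonicity lemmas -/

lemma T_mono (D : Set (Set X)) (μ : Measure X) (α : Set X → ℝ) {Q Q' : Set X} (h : Q ⊆ Q') :
    Tsum D μ α Q' ≤ Tsum D μ α Q := by
  refine tsum_set_mono (s := {P | P ∈ D ∧ Q' ⊆ P}) (t := {P | P ∈ D ∧ Q ⊆ P}) ?_ (c2 μ α)
  rintro P ⟨hP, hQP⟩; exact ⟨hP, h.trans hQP⟩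

lemma U_mono (D : Set (Set X)) (μ : Measure X) (α : Set X → ℝ) {Q Q' : Set X} (h : Q ⊆ Q') :
    Uq D μ α Q' ≤ Uq D μ α Q :=
  ENNReal.rpow_le_rpow (T_mono D μ α h) (by norm_num)

lemma V_mono (D : Set (Set X)) (μ : Measure X) (β : Set X → ℝ) {Q Q' : Set X} (h : Q ⊆ Q') :
    Vq D μ β Q' ≤ Vq D μ β Q := by
  refine iSup₂_le fun P hP => iSup_le fun hQ'P => ?_
  exact le_iSup₂_of_le P hP (le_iSup_of_le (h.trans hQ'P) le_rfl)

lemma T_le_A2 (D : Set (Set X)) (μ : Measure X) (α : Set X → ℝ) {Q : Set X} {x : X}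
    (hx : x ∈ Q) : Tsum D μ α Q ≤ A2 D μ α x := by
  refine tsum_set_mono (s := {P | P ∈ D ∧ Q ⊆ P}) (t := {P | P ∈ D ∧ x ∈ P}) ?_ (c2 μ α)
  rintro P ⟨hP, hQP⟩; exact ⟨hP, hQP hx⟩

lemma U_le_Af (D : Set (Set X)) (μ : Measure X) (α : Set X → ℝ) {Q : Set X} {x : X}
    (hx : x ∈ Q) : Uq D μ α Q ≤ Af D μ α x :=
  ENNReal.rpow_le_rpow (T_le_A2 D μ α hx) (by norm_num)

lemma V_le_Bf (D : Set (Set X)) (μ : Measure X) (β : Set X → ℝ) {Q : Set X} {x : X}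
    (hQ : Q ∈ D) (hx : x ∈ Q) : Vq D μ β Q ≤ Bf D μ β x := by
  refine iSup₂_le fun P hP => iSup_le fun hQP => ?_
  exact le_iSup₂_of_le P hP (le_iSup_of_le (hQP hx) le_rfl)

lemma c2_le_T (D : Set (Set X)) (μ : Measure X) (α : Set X → ℝ) {Q : Set X} (hQ : Q ∈ D) :
    c2 μ α Q ≤ Tsum D μ α Q :=
  ENNReal.le_tsum (⟨Q, hQ, subset_rfl⟩ : {P // P ∈ D ∧ Q ⊆ P})

lemma b2_le_S (D : Set (Set X)) (β : Set X → ℝ) {Q : Set X} (hQ : Q ∈ D) :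
    ENNReal.ofReal (β Q ^ 2) ≤ Ssum D β Q :=
  ENNReal.le_tsum (⟨Q, hQ, subset_rfl⟩ : {Q' // Q' ∈ D ∧ Q' ⊆ Q})

lemma SdivMu_le_V (D : Set (Set X)) (μ : Measure X) (β : Set X → ℝ) {Q : Set X} (hQ : Q ∈ D) :
    Ssum D β Q / μ Q ≤ (Vq D μ β Q)^2 := by
  have h : (Ssum D β Q / μ Q) ^ (1/2:ℝ) ≤ Vq D μ β Q :=
    le_iSup₂_of_le Q hQ (le_iSup_of_le subset_rfl le_rfl)
  calc Ssum D β Q / μ Q = ((Ssum D β Q / μ Q) ^ (1/2:ℝ))^2 := (sqrt_sq _).symm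
  _ ≤ (Vq D μ β Q)^2 := pow_le_pow_left₀ (zero_le) h 2

lemma Usq (D : Set (Set X)) (μ : Measure X) (α : Set X → ℝ) (Q : Set X) :
    (Uq D μ α Q)^2 = Tsum D μ α Q := sqrt_sq _

/-! ### the chain telescoping lemma -/

lemma chain_sum (D : Set (Set X)) (μ : Measure X) (α : Set X → ℝ) (x : X)
    (hchain : ∀ Q ∈ D, ∀ Q' ∈ D, (Q ∩ Q').Nonempty → Q ⊆ Q' ∨ Q' ⊆ Q) :
    ∀ (n : ℕ) (s : Finset {Q // Q ∈ D ∧ x ∈ Q}), s.card = n → s.Nonempty →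
      ∃ m ∈ s, (∀ Q ∈ s, m.1 ⊆ Q.1) ∧
        ∑ Q ∈ s, c2 μ α Q.1 / Uq D μ α Q.1 ≤ 2 * Uq D μ α m.1 := by
  intro n
  induction n with
  | zero =>
    intro s hcard hne
    exact absurd (Finset.card_eq_zero.mp hcard) hne.ne_empty
  | succ n ih =>
    intro s hcard hne
    -- find the least element m of the chain s
    obtain ⟨m, hm, hmin⟩ : ∃ m ∈ s, ∀ x ∈ s, ¬ x < m := by
      obtain ⟨m, hm⟩ := Finset.exists_minimal hne
      exact ⟨m, hm.1, fun x hx hlt => hm.not_lt hx hlt⟩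
    have hleast : ∀ Q ∈ s, m.1 ⊆ Q.1 := by
      intro Q hQ
      rcases hchain m.1 m.2.1 Q.1 Q.2.1 ⟨x, m.2.2, Q.2.2⟩ with h|h
      · exact h
      · rcases eq_or_ne Q m with rfl|hne'
        · exact subset_rfl
        · have hlt : Q.1 < m.1 := lt_of_le_of_ne h (fun hh => hne' (Subtype.ext hh))
          exact absurd (Subtype.coe_lt_coe.mp hlt) (hmin Q hQ)
    refine ⟨m, hm, hleast, ?_⟩
    rw [← Finset.add_sum_erase s _ hm]
    set t := s.erase m with ht
    rcases t.eq_empty_or_nonempty with hte|htne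
    · rw [hte]
      simp only [Finset.sum_empty, add_zero]
      have hcT : c2 μ α m.1 ≤ Tsum D μ α m.1 := c2_le_T D μ α m.2.1
      have := enn_step 0 (Uq D μ α m.1) (c2 μ α m.1)
        (by rw [Usq]; simpa using hcT)
      simpa using this
    · have hcardt : t.card = n := by
        rw [ht, Finset.card_erase_of_mem hm, hcard]; rfl
      obtain ⟨m', hm', hleast', hsum'⟩ := ih t hcardt htne
      have hm's : m' ∈ s := Finset.mem_of_mem_erase hm'
      have hmm' : m ≠ m' := fun h => (Finset.ne_of_mem_erase hm') h.symm
      have hmm'sub : m.1 ⊆ m'.1 := hleast m' hm's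
      have hone : m.1 ≠ m'.1 := fun h => hmm' (Subtype.ext h)
      -- T m' + c2 m ≤ T m
      have hkey : (Uq D μ α m'.1)^2 + c2 μ α m.1 ≤ (Uq D μ α m.1)^2 := by
        rw [Usq, Usq]
        have hT1 : Tsum D μ α m'.1 = ∑' P : Set X,
            ({P | P ∈ D ∧ m'.1 ⊆ P}).indicator (c2 μ α) P := tsum_subtype _ _
        have hT2 : Tsum D μ α m.1 = ∑' P : Set X,
            ({P | P ∈ D ∧ m.1 ⊆ P}).indicator (c2 μ α) P := tsum_subtype _ _
        have hnm : m.1 ∉ {P | P ∈ D ∧ m'.1 ⊆ P} := by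
          rintro ⟨-, hsub'⟩
          exact hone (Subset.antisymm hmm'sub hsub')
        have hins : insert m.1 {P | P ∈ D ∧ m'.1 ⊆ P} ⊆ {P | P ∈ D ∧ m.1 ⊆ P} := by
          rintro P (rfl|⟨hPD, hPs⟩)
          · exact ⟨m.2.1, subset_rfl⟩
          · exact ⟨hPD, hmm'sub.trans hPs⟩
        calc Tsum D μ α m'.1 + c2 μ α m.1
            = c2 μ α m.1 + Tsum D μ α m'.1 := add_comm _ _
        _ = ∑' P : Set X, (insert m.1 {P | P ∈ D ∧ m'.1 ⊆ P}).indicator (c2 μ α) P := by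
            rw [indicator_insert_tsum _ _ hnm, hT1]
        _ ≤ ∑' P : Set X, ({P | P ∈ D ∧ m.1 ⊆ P}).indicator (c2 μ α) P :=
            Summable.tsum_le_tsum (fun P => indicator_le_indicator_of_subset hins
              (fun _ => zero_le) P) ENNReal.summable ENNReal.summable
        _ = Tsum D μ α m.1 := hT2.symm
      have hstep := enn_step (Uq D μ α m'.1) (Uq D μ α m.1) (c2 μ α m.1) hkey
      calc c2 μ α m.1 / Uq D μ α m.1 + ∑ Q ∈ t, c2 μ α Q.1 / Uq D μ α Q.1
          ≤ c2 μ α m.1 / Uq D μ α m.1 + 2 * Uq D μ α m'.1 := add_le_add_right hsum' _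
      _ = 2 * Uq D μ α m'.1 + c2 μ α m.1 / Uq D μ α m.1 := add_comm _ _
      _ ≤ 2 * Uq D μ α m.1 := hstep

lemma key_pointwise (D : Set (Set X)) (μ : Measure X) (α : Set X → ℝ) (x : X)
    (hchain : ∀ Q ∈ D, ∀ Q' ∈ D, (Q ∩ Q').Nonempty → Q ⊆ Q' ∨ Q' ⊆ Q) :
    ∑' Q : {Q // Q ∈ D ∧ x ∈ Q}, c2 μ α Q.1 / Uq D μ α Q.1 ≤ 2 * Af D μ α x := by
  refine Summable.tsum_le_of_sum_le ENNReal.summable fun s => ?_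
  rcases s.eq_empty_or_nonempty with rfl|hne
  · simp
  · obtain ⟨m, hm, -, hsum⟩ := chain_sum D μ α x hchain s.card s rfl hne
    exact hsum.trans (mul_le_mul_right (U_le_Af D μ α m.2.2) 2)

/-! ### claim 1 -/

lemma claim1 (D : Set (Set X)) (Q0 : Set X) (hcount : D.Countable)
    (hmeas : ∀ Q ∈ D, MeasurableSet Q) (hsub : ∀ Q ∈ D, Q ⊆ Q0)
    (hchain : ∀ Q ∈ D, ∀ Q' ∈ D, (Q ∩ Q').Nonempty → Q ⊆ Q' ∨ Q' ⊆ Q)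
    (μ : Measure X) (α β : Set X → ℝ) :
    ∑' Q : {Q // Q ∈ D}, ((c2 μ α Q.1 / Uq D μ α Q.1) * Vq D μ β Q.1) * μ Q.1
      ≤ 2 * ∫⁻ x in Q0, Af D μ α x * Bf D μ β x ∂μ := by
  have hcnt : Countable {Q // Q ∈ D} := hcount.to_subtype
  set k : Set X → ℝ≥0∞ := fun Q => (c2 μ α Q / Uq D μ α Q) * Vq D μ β Q with hk
  set g : {Q // Q ∈ D} → X → ℝ≥0∞ := fun Q => Q.1.indicator (fun _ => k Q.1) with hg
  have step1 : ∀ Q : {Q // Q ∈ D}, k Q.1 * μ Q.1 = ∫⁻ x in Q0, g Q x ∂μ := by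
    intro Q
    rw [hg]
    simp only
    rw [lintegral_indicator (hmeas Q.1 Q.2), setLIntegral_const,
      Measure.restrict_apply (hmeas Q.1 Q.2),
      Set.inter_eq_self_of_subset_left (hsub Q.1 Q.2)]
  have meas : ∀ Q : {Q // Q ∈ D}, AEMeasurable (g Q) (μ.restrict Q0) := fun Q =>
    (measurable_const.indicator (hmeas Q.1 Q.2)).aemeasurable
  have step3 : ∀ x : X, ∑' Q : {Q // Q ∈ D}, g Q x ≤ 2 * (Af D μ α x * Bf D μ β x) := by
    intro x
    have h1 : ∑' Q : {Q // Q ∈ D}, g Q x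
        = ∑' Q : {Q // Q ∈ D ∧ x ∈ Q}, k Q.1 := by
      rw [tsum_and D (fun Q => x ∈ Q) k]
      exact tsum_congr fun Q => by rw [hg]; simp only; rw [Set.indicator_apply]
    rw [h1]
    calc ∑' Q : {Q // Q ∈ D ∧ x ∈ Q}, k Q.1
        ≤ ∑' Q : {Q // Q ∈ D ∧ x ∈ Q},
            (c2 μ α Q.1 / Uq D μ α Q.1) * Bf D μ β x := by
          refine Summable.tsum_le_tsum (fun Q => ?_) ENNReal.summable ENNReal.summable
          exact mul_le_mul_right (V_le_Bf D μ β Q.2.1 Q.2.2) _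
    _ = (∑' Q : {Q // Q ∈ D ∧ x ∈ Q}, c2 μ α Q.1 / Uq D μ α Q.1) * Bf D μ β x :=
          ENNReal.tsum_mul_right
    _ ≤ (2 * Af D μ α x) * Bf D μ β x :=
          mul_le_mul_left (key_pointwise D μ α x hchain) _
    _ = 2 * (Af D μ α x * Bf D μ β x) := mul_assoc _ _ _
  calc ∑' Q : {Q // Q ∈ D}, k Q.1 * μ Q.1
      = ∑' Q : {Q // Q ∈ D}, ∫⁻ x in Q0, g Q x ∂μ := tsum_congr step1
  _ = ∫⁻ x in Q0, ∑' Q : {Q // Q ∈ D}, g Q x ∂μ := (lintegral_tsum meas).symm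
  _ ≤ ∫⁻ x in Q0, 2 * (Af D μ α x * Bf D μ β x) ∂μ := lintegral_mono fun x => step3 x
  _ = 2 * ∫⁻ x in Q0, Af D μ α x * Bf D μ β x ∂μ :=
      lintegral_const_mul' 2 _ (by norm_num)

/-! ### claim 2 -/

lemma c2_ne_top (D : Set (Set X)) (μ : Measure X) (hμ : ∀ Q ∈ D, 0 < μ Q ∧ μ Q < ⊤)
    (α : Set X → ℝ) {Q : Set X} (hQ : Q ∈ D) : c2 μ α Q ≠ ⊤ :=
  (ENNReal.div_lt_top ENNReal.ofReal_ne_top (hμ Q hQ).1.ne').ne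

lemma a_ne_top (D : Set (Set X)) (μ : Measure X) (hμ : ∀ Q ∈ D, 0 < μ Q ∧ μ Q < ⊤)
    (α : Set X → ℝ) {Q : Set X} (hQ : Q ∈ D) :
    c2 μ α Q / Uq D μ α Q ≠ ⊤ := by
  rcases eq_or_ne (Uq D μ α Q) 0 with hU|hU
  · have hT : Tsum D μ α Q = 0 := by
      have := Usq D μ α Q; rw [hU] at this; simpa using this.symm
    have hc2 : c2 μ α Q = 0 := le_antisymm (hT ▸ c2_le_T D μ α hQ) (zero_le)
    simp [hc2]
  · exact (ENNReal.div_lt_top (c2_ne_top D μ hμ α hQ) hU).ne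

lemma U_le_W (D : Set (Set X)) (μ : Measure X) (α : Set X → ℝ) {Q : Set X}
    (hQ : Q ∈ D) (hT : Tsum D μ α Q ≠ ⊤) :
    Uq D μ α Q ≤ ∑' P : {P // P ∈ D ∧ Q ⊆ P}, c2 μ α P.1 / Uq D μ α P.1 := by
  rcases eq_or_ne (Uq D μ α Q) 0 with hU|hU0
  · rw [hU]; exact zero_le
  have hUfin : Uq D μ α Q ≠ ⊤ := ENNReal.rpow_ne_top_of_nonneg (by norm_num) hT
  have hTW : Tsum D μ α Q
      ≤ (∑' P : {P // P ∈ D ∧ Q ⊆ P}, c2 μ α P.1 / Uq D μ α P.1) * Uq D μ α Q := by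
    rw [← ENNReal.tsum_mul_right]
    refine Summable.tsum_le_tsum (fun P => ?_) ENNReal.summable ENNReal.summable
    rcases eq_or_ne (Uq D μ α P.1) 0 with hUP|hUP
    · have hTP : Tsum D μ α P.1 = 0 := by
        have := Usq D μ α P.1; rw [hUP] at this; simpa using this.symm
      have hc2P : c2 μ α P.1 = 0 := le_antisymm (hTP ▸ c2_le_T D μ α P.2.1) (zero_le)
      simp [hc2P]
    · have hUPle : Uq D μ α P.1 ≤ Uq D μ α Q := U_mono D μ α P.2.2
      have hUPfin : Uq D μ α P.1 ≠ ⊤ := ne_top_of_le_ne_top hUfin hUPle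
      calc c2 μ α P.1 = (c2 μ α P.1 / Uq D μ α P.1) * Uq D μ α P.1 :=
            (ENNReal.div_mul_cancel hUP hUPfin).symm
      _ ≤ (c2 μ α P.1 / Uq D μ α P.1) * Uq D μ α Q := mul_le_mul_right hUPle _
  refine (ENNReal.mul_le_mul_iff_left hU0 hUfin).mp ?_
  calc Uq D μ α Q * Uq D μ α Q = (Uq D μ α Q)^2 := (pow_two _).symm
  _ = Tsum D μ α Q := Usq D μ α Q
  _ ≤ _ := hTW

lemma claim2 (D : Set (Set X)) (μ : Measure X) (hμ : ∀ Q ∈ D, 0 < μ Q ∧ μ Q < ⊤)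
    (α β : Set X → ℝ)
    (hgood : ∀ Q ∈ D, ENNReal.ofReal (β Q ^ 2) ≠ 0 → Tsum D μ α Q ≠ ⊤) :
    ∑' Q : {Q // Q ∈ D}, ENNReal.ofReal (β Q.1 ^ 2) * (Uq D μ α Q.1 / Vq D μ β Q.1)
      ≤ ∑' Q : {Q // Q ∈ D}, ((c2 μ α Q.1 / Uq D μ α Q.1) * Vq D μ β Q.1) * μ Q.1 := by
  set K : Set X → ℝ≥0∞ := fun P => (c2 μ α P / Uq D μ α P) / Vq D μ β P with hK
  have h1 : ∀ Q : {Q // Q ∈ D},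
      ENNReal.ofReal (β Q.1 ^ 2) * (Uq D μ α Q.1 / Vq D μ β Q.1)
        ≤ ∑' P : {P // P ∈ D},
            if Q.1 ⊆ P.1 then ENNReal.ofReal (β Q.1 ^ 2) * K P.1 else 0 := by
    intro Q
    by_cases hb : ENNReal.ofReal (β Q.1 ^ 2) = 0
    · rw [hb]; simp
    calc ENNReal.ofReal (β Q.1 ^ 2) * (Uq D μ α Q.1 / Vq D μ β Q.1)
        ≤ ENNReal.ofReal (β Q.1 ^ 2) *
            ((∑' P : {P // P ∈ D ∧ Q.1 ⊆ P}, c2 μ α P.1 / Uq D μ α P.1) / Vq D μ β Q.1) :=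
          mul_le_mul_right (ENNReal.div_le_div_right (U_le_W D μ α Q.2 (hgood Q.1 Q.2 hb)) _) _
    _ = ∑' P : {P // P ∈ D ∧ Q.1 ⊆ P},
          ENNReal.ofReal (β Q.1 ^ 2) * ((c2 μ α P.1 / Uq D μ α P.1) / Vq D μ β Q.1) := by
        rw [div_eq_mul_inv, ← ENNReal.tsum_mul_right, ← ENNReal.tsum_mul_left]
        exact tsum_congr fun P => by simp [div_eq_mul_inv, mul_assoc]
    _ ≤ ∑' P : {P // P ∈ D ∧ Q.1 ⊆ P}, ENNReal.ofReal (β Q.1 ^ 2) * K P.1 := by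
        refine Summable.tsum_le_tsum (fun P => mul_le_mul_right ?_ _) ENNReal.summable ENNReal.summable
        exact ENNReal.div_le_div_left (V_mono D μ β P.2.2) _
    _ = ∑' P : {P // P ∈ D},
          if Q.1 ⊆ P.1 then ENNReal.ofReal (β Q.1 ^ 2) * K P.1 else 0 :=
        tsum_and D (fun P => Q.1 ⊆ P) (fun P => ENNReal.ofReal (β Q.1 ^ 2) * K P)
  have h2 : ∑' (Q : {Q // Q ∈ D}) (P : {P // P ∈ D}),
        (if Q.1 ⊆ P.1 then ENNReal.ofReal (β Q.1 ^ 2) * K P.1 else 0)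
      = ∑' P : {P // P ∈ D}, K P.1 * Ssum D β P.1 := by
    rw [ENNReal.tsum_comm]
    refine tsum_congr fun P => ?_
    have : ∀ Q : {Q // Q ∈ D},
        (if Q.1 ⊆ P.1 then ENNReal.ofReal (β Q.1 ^ 2) * K P.1 else 0)
          = K P.1 * (if Q.1 ⊆ P.1 then ENNReal.ofReal (β Q.1 ^ 2) else 0) := by
      intro Q; split_ifs <;> ring
    rw [tsum_congr this, ENNReal.tsum_mul_left]
    congr 1
    exact (tsum_and D (fun Q => Q ⊆ P.1) (fun Q => ENNReal.ofReal (β Q ^ 2))).symm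
  have h3 : ∀ P : {P // P ∈ D},
      K P.1 * Ssum D β P.1 ≤ ((c2 μ α P.1 / Uq D μ α P.1) * Vq D μ β P.1) * μ P.1 := by
    intro P
    set a := c2 μ α P.1 / Uq D μ α P.1 with ha
    have hafin : a ≠ ⊤ := a_ne_top D μ hμ α P.2
    set V := Vq D μ β P.1 with hV
    set S := Ssum D β P.1 with hS
    rcases eq_or_ne V 0 with hV0|hV0
    · have hSm : S / μ P.1 = 0 := by
        have := SdivMu_le_V D μ β P.2 (Q := P.1)
        rw [← hV, hV0] at this
        simpa using this
      have hS0 : S = 0 := by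
        rcases (ENNReal.div_eq_zero_iff).mp hSm with h|h
        · exact h
        · exact absurd h (hμ P.1 P.2).2.ne
      rw [hK]
      simp only [← ha, ← hV, ← hS, hS0, mul_zero]
      exact zero_le
    rcases eq_or_ne V ⊤ with hVt|hVt
    · rw [hK]
      simp only [← ha, ← hV, hVt, ENNReal.div_top, zero_mul]
      exact zero_le
    have hS' : S ≤ V^2 * μ P.1 :=
      (ENNReal.div_le_iff (hμ P.1 P.2).1.ne' (hμ P.1 P.2).2.ne).mp (SdivMu_le_V D μ β P.2)
    calc K P.1 * S = (a / V) * S := by rw [hK]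
    _ ≤ (a / V) * (V^2 * μ P.1) := mul_le_mul_right hS' _
    _ = (a * (V * μ P.1)) * (V⁻¹ * V) := by rw [div_eq_mul_inv]; ring
    _ = a * (V * μ P.1) := by rw [ENNReal.inv_mul_cancel hV0 hVt, mul_one]
    _ = (a * V) * μ P.1 := by ring
  calc ∑' Q : {Q // Q ∈ D}, ENNReal.ofReal (β Q.1 ^ 2) * (Uq D μ α Q.1 / Vq D μ β Q.1)
      ≤ ∑' (Q : {Q // Q ∈ D}) (P : {P // P ∈ D}),
          (if Q.1 ⊆ P.1 then ENNReal.ofReal (β Q.1 ^ 2) * K P.1 else 0) :=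
        Summable.tsum_le_tsum h1 ENNReal.summable ENNReal.summable
  _ = ∑' P : {P // P ∈ D}, K P.1 * Ssum D β P.1 := h2
  _ ≤ ∑' P : {P // P ∈ D}, ((c2 μ α P.1 / Uq D μ α P.1) * Vq D μ β P.1) * μ P.1 :=
        Summable.tsum_le_tsum h3 ENNReal.summable ENNReal.summable

/-! ### main abstract lemma -/

lemma tent_abstract (D : Set (Set X)) (Q0 : Set X) (hcount : D.Countable)
    (hmeas : ∀ Q ∈ D, MeasurableSet Q) (hsub : ∀ Q ∈ D, Q ⊆ Q0)
    (hchain : ∀ Q ∈ D, ∀ Q' ∈ D, (Q ∩ Q').Nonempty → Q ⊆ Q' ∨ Q' ⊆ Q)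
    (μ : Measure X) (hμ : ∀ Q ∈ D, 0 < μ Q ∧ μ Q < ⊤) (α β : Set X → ℝ) :
    ∑' Q : {Q // Q ∈ D}, ENNReal.ofReal |α Q.1 * β Q.1|
      ≤ 4 * ∫⁻ x in Q0, Af D μ α x * Bf D μ β x ∂μ := by
  set I := ∫⁻ x in Q0, Af D μ α x * Bf D μ β x ∂μ with hI
  by_cases hbad : ∃ Q ∈ D,
      (ENNReal.ofReal (β Q ^ 2) ≠ 0 ∧ Tsum D μ α Q = ⊤) ∨
      (ENNReal.ofReal (α Q ^ 2) ≠ 0 ∧ Vq D μ β Q = ⊤)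
  · obtain ⟨Q, hQ, hcase⟩ := hbad
    have htop : ∀ x ∈ Q, Af D μ α x * Bf D μ β x = ⊤ := by
      intro x hx
      rcases hcase with ⟨hb, hT⟩|⟨ha, hV⟩
      · have hA : Af D μ α x = ⊤ := by
          have h : A2 D μ α x = ⊤ := top_le_iff.mp (hT ▸ T_le_A2 D μ α hx)
          rw [Af, h]; exact ENNReal.top_rpow_of_pos (by norm_num)
        have hBne : Bf D μ β x ≠ 0 := by
          have h1 : ENNReal.ofReal (β Q ^ 2) / μ Q ≠ 0 := by
            simp only [ne_eq, ENNReal.div_eq_zero_iff, not_or]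
            exact ⟨hb, (hμ Q hQ).2.ne⟩
          have h2 : ENNReal.ofReal (β Q ^ 2) / μ Q ≤ Ssum D β Q / μ Q :=
            ENNReal.div_le_div_right (b2_le_S D β hQ) _
          have h3 : (Ssum D β Q / μ Q) ^ (1/2:ℝ) ≤ Bf D μ β x :=
            le_iSup₂_of_le Q hQ (le_iSup_of_le hx le_rfl)
          intro h0
          have hz0 : (Ssum D β Q / μ Q) ^ (1/2:ℝ) = 0 :=
            le_antisymm (h0 ▸ h3) (zero_le)
          rcases ENNReal.rpow_eq_zero_iff.mp hz0 with ⟨hz,-⟩|⟨-,hneg⟩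
          · exact h1 (le_antisymm (hz ▸ h2) (zero_le))
          · norm_num at hneg
        rw [hA, ENNReal.top_mul hBne]
      · have hB : Bf D μ β x = ⊤ := by
          have h := V_le_Bf D μ β hQ hx
          rw [hV] at h; exact top_le_iff.mp h
        have hAne : Af D μ α x ≠ 0 := by
          have h1 : c2 μ α Q ≠ 0 := by
            simp only [c2, ne_eq, ENNReal.div_eq_zero_iff, not_or]
            exact ⟨ha, (hμ Q hQ).2.ne⟩
          have h2 : c2 μ α Q ≤ A2 D μ α x :=
            le_trans (c2_le_T D μ α hQ) (T_le_A2 D μ α hx)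
          intro h0
          rcases ENNReal.rpow_eq_zero_iff.mp h0 with ⟨hz,-⟩|⟨-,hneg⟩
          · exact h1 (le_antisymm (hz ▸ h2) (zero_le))
          · norm_num at hneg
        rw [hB, ENNReal.mul_top hAne]
    have hItop : I = ⊤ := by
      rw [hI]
      refine top_le_iff.mp ?_
      calc (⊤:ℝ≥0∞) = ⊤ * μ Q := (ENNReal.top_mul (hμ Q hQ).1.ne').symm
      _ = ∫⁻ _ in Q, (⊤:ℝ≥0∞) ∂μ := (setLIntegral_const Q ⊤).symm
      _ ≤ ∫⁻ x in Q, Af D μ α x * Bf D μ β x ∂μ :=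
          setLIntegral_mono' (hmeas Q hQ) (fun x hx => (htop x hx).ge)
      _ ≤ ∫⁻ x in Q0, Af D μ α x * Bf D μ β x ∂μ := lintegral_mono_set (hsub Q hQ)
    rw [hItop]
    simp
  · push_neg at hbad
    have hgood1 : ∀ Q ∈ D, ENNReal.ofReal (β Q ^ 2) ≠ 0 → Tsum D μ α Q ≠ ⊤ :=
      fun Q hQ hb => (hbad Q hQ).1 hb
    have hgood2 : ∀ Q ∈ D, ENNReal.ofReal (α Q ^ 2) ≠ 0 → Vq D μ β Q ≠ ⊤ :=
      fun Q hQ ha => (hbad Q hQ).2 ha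
    have hterm : ∀ Q : {Q // Q ∈ D},
        2 * ENNReal.ofReal |α Q.1 * β Q.1|
          ≤ ((c2 μ α Q.1 / Uq D μ α Q.1) * Vq D μ β Q.1) * μ Q.1
            + ENNReal.ofReal (β Q.1 ^ 2) * (Uq D μ α Q.1 / Vq D μ β Q.1) := by
      intro Q
      by_cases hA0 : ENNReal.ofReal (α Q.1 ^ 2) = 0
      · have hα : α Q.1 = 0 := by
          have h := ENNReal.ofReal_eq_zero.mp hA0
          nlinarith [sq_nonneg (α Q.1)]
        simp [hα]
      by_cases hB0 : ENNReal.ofReal (β Q.1 ^ 2) = 0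
      · have hβ : β Q.1 = 0 := by
          have h := ENNReal.ofReal_eq_zero.mp hB0
          nlinarith [sq_nonneg (β Q.1)]
        simp [hβ]
      have hQD := Q.2
      have hμ0 : μ Q.1 ≠ 0 := (hμ Q.1 hQD).1.ne'
      have hμt : μ Q.1 ≠ ⊤ := (hμ Q.1 hQD).2.ne
      have hc2ne : c2 μ α Q.1 ≠ 0 := by
        simp only [c2, ne_eq, ENNReal.div_eq_zero_iff, not_or]
        exact ⟨hA0, hμt⟩
      have hTne : Tsum D μ α Q.1 ≠ 0 :=
        fun h => hc2ne (le_antisymm (h ▸ c2_le_T D μ α hQD) (zero_le))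
      have hU0 : Uq D μ α Q.1 ≠ 0 := by
        rw [Uq]; intro h
        rcases ENNReal.rpow_eq_zero_iff.mp h with ⟨hz,-⟩|⟨-,hneg⟩
        · exact hTne hz
        · norm_num at hneg
      have hUt : Uq D μ α Q.1 ≠ ⊤ :=
        ENNReal.rpow_ne_top_of_nonneg (by norm_num) (hgood1 Q.1 hQD hB0)
      have hV0 : Vq D μ β Q.1 ≠ 0 := by
        intro h0
        have h2 : ENNReal.ofReal (β Q.1 ^ 2) / μ Q.1 ≤ Ssum D β Q.1 / μ Q.1 :=
          ENNReal.div_le_div_right (b2_le_S D β hQD) _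
        have h3 : (Ssum D β Q.1 / μ Q.1) ^ (1/2:ℝ) ≤ Vq D μ β Q.1 :=
          le_iSup₂_of_le Q.1 hQD (le_iSup_of_le subset_rfl le_rfl)
        have hz0 : (Ssum D β Q.1 / μ Q.1) ^ (1/2:ℝ) = 0 :=
          le_antisymm (h0 ▸ h3) (zero_le)
        rcases ENNReal.rpow_eq_zero_iff.mp hz0 with ⟨hz,-⟩|⟨-,hneg⟩
        · have hzz : ENNReal.ofReal (β Q.1 ^ 2) / μ Q.1 = 0 :=
            le_antisymm (hz ▸ h2) (zero_le)
          rcases ENNReal.div_eq_zero_iff.mp hzz with h|h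
          · exact hB0 h
          · exact hμt h
        · norm_num at hneg
      have hVt : Vq D μ β Q.1 ≠ ⊤ := hgood2 Q.1 hQD hA0
      have hw0 : Vq D μ β Q.1 / Uq D μ α Q.1 ≠ 0 :=
        (ENNReal.div_pos hV0 hUt).ne'
      have hwt : Vq D μ β Q.1 / Uq D μ α Q.1 ≠ ⊤ :=
        (ENNReal.div_lt_top hVt hU0).ne
      have hprod : ((ENNReal.ofReal (α Q.1 ^ 2) * (Vq D μ β Q.1 / Uq D μ α Q.1)) ^ (1/2:ℝ))
            * ((ENNReal.ofReal (β Q.1 ^ 2) / (Vq D μ β Q.1 / Uq D μ α Q.1)) ^ (1/2:ℝ))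
          = ENNReal.ofReal |α Q.1 * β Q.1| := by
        rw [← ENNReal.mul_rpow_of_nonneg _ _ (by norm_num : (0:ℝ) ≤ 1/2),
          mul_assoc, ENNReal.mul_div_cancel hw0 hwt]
        have h2 : ENNReal.ofReal (α Q.1 ^ 2) * ENNReal.ofReal (β Q.1 ^ 2)
            = (ENNReal.ofReal |α Q.1 * β Q.1|)^2 := by
          rw [← ENNReal.ofReal_mul (sq_nonneg _), ← mul_pow, ← sq_abs,
            ENNReal.ofReal_pow (abs_nonneg _)]
        rw [h2, sq_sqrt']
      have hamgm : 2 * ENNReal.ofReal |α Q.1 * β Q.1|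
          ≤ ENNReal.ofReal (α Q.1 ^ 2) * (Vq D μ β Q.1 / Uq D μ α Q.1)
            + ENNReal.ofReal (β Q.1 ^ 2) / (Vq D μ β Q.1 / Uq D μ α Q.1) := by
        rw [← hprod]
        calc 2 * (((ENNReal.ofReal (α Q.1 ^ 2) * (Vq D μ β Q.1 / Uq D μ α Q.1)) ^ (1/2:ℝ))
              * ((ENNReal.ofReal (β Q.1 ^ 2) / (Vq D μ β Q.1 / Uq D μ α Q.1)) ^ (1/2:ℝ)))
            ≤ ((ENNReal.ofReal (α Q.1 ^ 2) * (Vq D μ β Q.1 / Uq D μ α Q.1)) ^ (1/2:ℝ))^2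
              + ((ENNReal.ofReal (β Q.1 ^ 2) / (Vq D μ β Q.1 / Uq D μ α Q.1)) ^ (1/2:ℝ))^2 :=
              two_mul_le_sq_add _ _
        _ = _ := by rw [sqrt_sq, sqrt_sq]
      have hκ : ENNReal.ofReal (α Q.1 ^ 2) * (Vq D μ β Q.1 / Uq D μ α Q.1)
          = ((c2 μ α Q.1 / Uq D μ α Q.1) * Vq D μ β Q.1) * μ Q.1 := by
        have hc2eq : c2 μ α Q.1 = ENNReal.ofReal (α Q.1 ^ 2) / μ Q.1 := rfl
        rw [hc2eq, div_eq_mul_inv (Vq D μ β Q.1), div_eq_mul_inv _ (μ Q.1),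
          div_eq_mul_inv _ (Uq D μ α Q.1)]
        rw [show ENNReal.ofReal (α Q.1 ^ 2) * (μ Q.1)⁻¹ * (Uq D μ α Q.1)⁻¹ * Vq D μ β Q.1 * μ Q.1
            = (ENNReal.ofReal (α Q.1 ^ 2) * (Vq D μ β Q.1 * (Uq D μ α Q.1)⁻¹))
              * ((μ Q.1)⁻¹ * μ Q.1) by ring,
          ENNReal.inv_mul_cancel hμ0 hμt, mul_one]
      have hlam : ENNReal.ofReal (β Q.1 ^ 2) / (Vq D μ β Q.1 / Uq D μ α Q.1)
          = ENNReal.ofReal (β Q.1 ^ 2) * (Uq D μ α Q.1 / Vq D μ β Q.1) := by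
        rw [div_eq_mul_inv (ENNReal.ofReal (β Q.1 ^ 2)),
          ENNReal.inv_div (Or.inl hUt) (Or.inl hU0)]
      rw [← hκ, ← hlam]
      exact hamgm
    have hsum : 2 * ∑' Q : {Q // Q ∈ D}, ENNReal.ofReal |α Q.1 * β Q.1| ≤ 4 * I := by
      rw [← ENNReal.tsum_mul_left]
      calc ∑' Q : {Q // Q ∈ D}, 2 * ENNReal.ofReal |α Q.1 * β Q.1|
          ≤ ∑' Q : {Q // Q ∈ D},
              (((c2 μ α Q.1 / Uq D μ α Q.1) * Vq D μ β Q.1) * μ Q.1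
                + ENNReal.ofReal (β Q.1 ^ 2) * (Uq D μ α Q.1 / Vq D μ β Q.1)) :=
            Summable.tsum_le_tsum hterm ENNReal.summable ENNReal.summable
      _ = (∑' Q : {Q // Q ∈ D}, ((c2 μ α Q.1 / Uq D μ α Q.1) * Vq D μ β Q.1) * μ Q.1)
            + ∑' Q : {Q // Q ∈ D}, ENNReal.ofReal (β Q.1 ^ 2) * (Uq D μ α Q.1 / Vq D μ β Q.1) :=
            Summable.tsum_add ENNReal.summable ENNReal.summable
      _ ≤ 2 * I + 2 * I := add_le_add
            (claim1 D Q0 hcount hmeas hsub hchain μ α β)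
            ((claim2 D μ hμ α β hgood1).trans (claim1 D Q0 hcount hmeas hsub hchain μ α β))
      _ = 4 * I := by ring
    calc ∑' Q : {Q // Q ∈ D}, ENNReal.ofReal |α Q.1 * β Q.1|
        ≤ 2 * ∑' Q : {Q // Q ∈ D}, ENNReal.ofReal |α Q.1 * β Q.1| :=
          le_mul_of_one_le_left (zero_le) one_le_two
    _ ≤ 4 * I := hsum

end TentAux

end TentAuxSection

/-- A dyadic grid on a set `E ⊆ ℝ^{n+1}`: a countable collection
`𝔻 = ⋃_{k ∈ ℤ} 𝔻_k` of Borel subsets of `E` ("cubes") such that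
(i) each generation `𝔻_k` is a pairwise disjoint cover of `E`;
(ii) cubes of finer generations are contained in, or disjoint from, cubes of
coarser generations; (iii) every cube has a unique ancestor in each coarser
generation. -/
structure DyadicGrid {n : ℕ} (E : Set (EuclideanSpace ℝ (Fin (n + 1)))) where
  cubes : ℤ → Set (Set (EuclideanSpace ℝ (Fin (n + 1))))
  countable : (⋃ k : ℤ, cubes k).Countable
  borel : ∀ k : ℤ, ∀ Q ∈ cubes k, MeasurableSet Q
  cover : ∀ k : ℤ, ⋃₀ cubes k = E
  pairwiseDisjoint : ∀ k : ℤ, (cubes k).PairwiseDisjoint id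
  nested : ∀ ⦃k j : ℤ⦄, j ≤ k → ∀ Q ∈ cubes k, ∀ Q' ∈ cubes j, Q ⊆ Q' ∨ Q ∩ Q' = ∅
  parent : ∀ ⦃k j : ℤ⦄, j < k → ∀ Q ∈ cubes k, ∃! Q', Q' ∈ cubes j ∧ Q ⊆ Q'

/-- `Q0` is either `E` itself, in which case `DQ0` consists of all the cubes of the
grid, or `Q0` is a cube of the grid, in which case `DQ0` consists of the cubes
contained in `Q0` of generation at least that of `Q0`. -/
def IsLocalizedFamily {n : ℕ} {E : Set (EuclideanSpace ℝ (Fin (n + 1)))}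
    (D : DyadicGrid E) (Q0 : Set (EuclideanSpace ℝ (Fin (n + 1))))
    (DQ0 : Set (Set (EuclideanSpace ℝ (Fin (n + 1))))) : Prop :=
  (Q0 = E ∧ DQ0 = ⋃ k : ℤ, D.cubes k) ∨
  (∃ k0 : ℤ, Q0 ∈ D.cubes k0 ∧
    DQ0 = {Q | ∃ k : ℤ, k0 ≤ k ∧ Q ∈ D.cubes k ∧ Q ⊆ Q0})

/-- **Discrete tent-space duality** (Lemma `lemma:tentspaces` of the paper).
For any two sequences `α, β` of real numbers indexed by the cubes of `𝔻_{Q⁰}` one has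
`∑_{Q ∈ 𝔻_{Q⁰}} |α_Q β_Q| ≤ 4 ∫_{Q⁰} 𝒜^μ_{Q⁰}α(x) · ℬ^μ_{Q⁰}β(x) dμ(x)`,
where `𝒜^μ_{Q⁰}α(x) = (∑_{x ∈ Q ∈ 𝔻_{Q⁰}} α_Q²/μ(Q))^{1/2}` and
`ℬ^μ_{Q⁰}β(x) = sup_{x ∈ Q ∈ 𝔻_{Q⁰}} (μ(Q)⁻¹ ∑_{Q' ∈ 𝔻_Q} β_{Q'}²)^{1/2}`. -/
theorem discrete_tent_space_duality {n : ℕ}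
    (E : Set (EuclideanSpace ℝ (Fin (n + 1)))) (D : DyadicGrid E)
    (Q0 : Set (EuclideanSpace ℝ (Fin (n + 1))))
    (DQ0 : Set (Set (EuclideanSpace ℝ (Fin (n + 1)))))
    (hQ0 : IsLocalizedFamily D Q0 DQ0)
    (μ : Measure (EuclideanSpace ℝ (Fin (n + 1))))
    (hμ : ∀ Q ∈ DQ0, 0 < μ Q ∧ μ Q < ⊤)
    (α β : Set (EuclideanSpace ℝ (Fin (n + 1))) → ℝ) :
    ∑' Q : DQ0, ENNReal.ofReal |α Q.1 * β Q.1| ≤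
      4 * ∫⁻ x in Q0,
        (∑' Q : {Q // Q ∈ DQ0 ∧ x ∈ Q}, ENNReal.ofReal (α Q.1 ^ 2) / μ Q.1) ^ (1/2 : ℝ) *
        (⨆ Q ∈ DQ0, ⨆ _ : x ∈ Q,
          ((∑' Q' : {Q' // Q' ∈ DQ0 ∧ Q' ⊆ Q}, ENNReal.ofReal (β Q'.1 ^ 2)) / μ Q)
            ^ (1/2 : ℝ)) ∂μ := by
  classical
  have hmem : ∀ Q ∈ DQ0, ∃ k, Q ∈ D.cubes k := by
    rcases id hQ0 with ⟨-, hD⟩|⟨k0, -, hD⟩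
    · rw [hD]; intro Q hQ; exact Set.mem_iUnion.mp hQ
    · rw [hD]; rintro Q ⟨k, -, hk, -⟩; exact ⟨k, hk⟩
  have hcount : DQ0.Countable := by
    refine D.countable.mono ?_
    intro Q hQ
    obtain ⟨k, hk⟩ := hmem Q hQ
    exact Set.mem_iUnion.mpr ⟨k, hk⟩
  have hmeas : ∀ Q ∈ DQ0, MeasurableSet Q := fun Q hQ => by
    obtain ⟨k, hk⟩ := hmem Q hQ
    exact D.borel k Q hk
  have hsub : ∀ Q ∈ DQ0, Q ⊆ Q0 := by
    rcases id hQ0 with ⟨hE, -⟩|⟨k0, -, hD⟩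
    · intro Q hQ
      obtain ⟨k, hk⟩ := hmem Q hQ
      rw [hE, ← D.cover k]
      exact Set.subset_sUnion_of_mem hk
    · intro Q hQ
      rw [hD] at hQ
      obtain ⟨k, -, -, hsub'⟩ := hQ
      exact hsub'
  have hchain : ∀ Q ∈ DQ0, ∀ Q' ∈ DQ0, (Q ∩ Q').Nonempty → Q ⊆ Q' ∨ Q' ⊆ Q := by
    intro Q hQ Q' hQ' hne
    obtain ⟨k, hk⟩ := hmem Q hQ
    obtain ⟨j, hj⟩ := hmem Q' hQ'
    rcases le_total j k with h|h
    · rcases D.nested h Q hk Q' hj with hss|hdisj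
      · exact Or.inl hss
      · rw [hdisj] at hne; simp at hne
    · rcases D.nested h Q' hj Q hk with hss|hdisj
      · exact Or.inr hss
      · have hne' : (Q' ∩ Q).Nonempty := by rwa [Set.inter_comm]
        rw [hdisj] at hne'; simp at hne'
  exact TentAux.tent_abstract DQ0 Q0 hcount hmeas hsub hchain μ hμ α β
end

section
/- Let E ⊆ ℝ^{n+1}, let 𝔻 = ⋃_{k∈ℤ} 𝔻_k be a dyadic grid on E, and fix Q⁰ which is either E or a cube of 𝔻. Let μ and ν be nonnegative Borel measures on Q⁰ with 0 < μ(Q) < ∞ and 0 < ν(Q) < ∞ for every Q ∈ 𝔻_{Q⁰}. Assume there exist α, β ∈ (0,1) such that for every Q ∈ 𝔻_{Q⁰} and every Borel set F ⊆ Q: μ(F)/μ(Q) > α implies ν(F)/ν(Q) ≥ β. Given a sequence of nonnegative real numbers γ = {γ_Q}_{Q ∈ 𝔻_{Q⁰}}, set ⦀γ⦀_ν := sup_{Q ∈ 𝔻_{Q⁰}} ν(Q)^{-1} ∑_{Q' ∈ 𝔻_Q} γ_{Q'} ν(Q') and ⦀γ⦀_μ := sup_{Q ∈ 𝔻_{Q⁰}}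 μ(Q)^{-1} ∑_{Q' ∈ 𝔻_Q} γ_{Q'} μ(Q'). Then (1−α) β ⦀γ⦀_μ ≤ ⦀γ⦀_ν ≤ ((1−α) β)^{-1} ⦀γ⦀_μ. -/
open Metric MeasureTheory
open Set
open scoped ENNReal


private lemma finsum_le_tsum_aux {X : Type*} (DQ0 : Set (Set X)) (Q R : Set X)
    (F : Set X → ℝ≥0∞) (T' : Finset {Q' // Q' ∈ DQ0 ∧ Q' ⊆ Q})
    (hT' : ∀ x ∈ T', x.1 ⊆ R) :
    ∑ x ∈ T', F x.1 ≤ ∑' y : {Q' // Q' ∈ DQ0 ∧ Q' ⊆ R}, F y.1 := by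
  classical
  have h := ENNReal.sum_le_tsum (f := fun y : {Q' // Q' ∈ DQ0 ∧ Q' ⊆ R} => F y.1)
    (T'.attach.map ⟨fun x => (⟨x.1.1, x.1.2.1, hT' x.1 x.2⟩ : {Q' // Q' ∈ DQ0 ∧ Q' ⊆ R}),
      fun x y hxy => Subtype.ext (Subtype.ext (by simpa using congrArg Subtype.val hxy))⟩)
  rw [Finset.sum_map] at h
  exact le_trans (le_of_eq (Finset.sum_attach T' (fun q => F q.1)).symm) h

private lemma carleson_core {X : Type*} [MeasurableSpace X] (DQ0 : Set (Set X))
    (hmeas : ∀ Q ∈ DQ0, MeasurableSet Q)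
    (hlam : ∀ Q1 ∈ DQ0, ∀ Q2 ∈ DQ0, Q1 ⊆ Q2 ∨ Q2 ⊆ Q1 ∨ Q1 ∩ Q2 = ∅)
    (μ ν : Measure X)
    (hμ : ∀ Q ∈ DQ0, 0 < μ Q ∧ μ Q < ⊤) (hν : ∀ Q ∈ DQ0, 0 < ν Q ∧ ν Q < ⊤)
    (a b : ℝ) (ha0 : 0 ≤ a) (ha1 : a < 1) (hb0 : 0 < b)
    (hab : ∀ Q ∈ DQ0, ∀ F, F ⊆ Q → MeasurableSet F →
      ENNReal.ofReal a < μ F / μ Q → ENNReal.ofReal b ≤ ν F / ν Q)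
    (γ : Set X → ℝ) :
    (⨆ Q ∈ DQ0, (∑' Q' : {Q' // Q' ∈ DQ0 ∧ Q' ⊆ Q}, ENNReal.ofReal (γ Q'.1) * ν Q'.1) / ν Q) ≤
      (⨆ Q ∈ DQ0, (∑' Q' : {Q' // Q' ∈ DQ0 ∧ Q' ⊆ Q}, ENNReal.ofReal (γ Q'.1) * μ Q'.1) / μ Q) /
        ENNReal.ofReal ((1 - a) * b) := by
  classical
  set M := ⨆ Q ∈ DQ0, (∑' Q' : {Q' // Q' ∈ DQ0 ∧ Q' ⊆ Q},
      ENNReal.ofReal (γ Q'.1) * μ Q'.1) / μ Q with hM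
  set c1 := ENNReal.ofReal (1 - a) with hc1
  set c2 := ENNReal.ofReal b with hc2
  have hc10 : c1 ≠ 0 := (ENNReal.ofReal_pos.2 (by linarith)).ne'
  have hc1t : c1 ≠ ⊤ := ENNReal.ofReal_ne_top
  have hc20 : c2 ≠ 0 := (ENNReal.ofReal_pos.2 hb0).ne'
  have hc2t : c2 ≠ ⊤ := ENNReal.ofReal_ne_top
  have hcc : ENNReal.ofReal ((1 - a) * b) = c1 * c2 := ENNReal.ofReal_mul (by linarith)
  rw [hcc]
  refine iSup₂_le fun Q hQ => ?_
  by_cases hMtop : M = ⊤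
  · rw [hMtop, ENNReal.top_div_of_ne_top (ENNReal.mul_ne_top hc1t hc2t)]
    exact le_top
  have hνQ0 : ν Q ≠ 0 := (hν Q hQ).1.ne'
  have hνQt : ν Q ≠ ⊤ := (hν Q hQ).2.ne
  rw [ENNReal.div_le_iff hνQ0 hνQt, ENNReal.tsum_eq_iSup_sum]
  refine iSup_le fun T => ?_
  refine ENNReal.le_of_forall_pos_le_add fun ε hε _ => ?_
  -- the threshold s
  set δ : ℝ≥0∞ := (ε : ℝ≥0∞) * c2 / ν Q with hδ
  have hδ0 : δ ≠ 0 := ENNReal.div_ne_zero.2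
    ⟨mul_ne_zero (by exact_mod_cast hε.ne') hc20, hνQt⟩
  have hδt : δ ≠ ⊤ := (ENNReal.div_lt_top (ENNReal.mul_ne_top ENNReal.coe_ne_top hc2t) hνQ0).ne
  set s : ℝ≥0∞ := M / c1 + δ with hs
  have hMc1t : M / c1 ≠ ⊤ := (ENNReal.div_lt_top hMtop hc10).ne
  have hst : s ≠ ⊤ := ENNReal.add_ne_top.2 ⟨hMc1t, hδt⟩
  have hs0 : s ≠ 0 := fun h => hδ0 (add_eq_zero.1 h).2
  have hMlt : M < s * c1 :=
    (ENNReal.div_lt_iff (Or.inl hc10) (Or.inl hc1t)).1 (ENNReal.lt_add_right hMc1t hδ0)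
  -- notation
  set g : {Q' // Q' ∈ DQ0 ∧ Q' ⊆ Q} → ℝ≥0∞ := fun Q' => ENNReal.ofReal (γ Q'.1) with hg
  set f : Set X → X → ℝ≥0∞ := fun R x =>
    ∑ Q' ∈ T.filter (fun Q' => Q'.1 ⊆ R), g Q' * Q'.1.indicator 1 x with hf
  have hfmeas : ∀ R : Set X, Measurable (f R) := by
    intro R
    exact Finset.measurable_sum _ fun Q' _ =>
      ((measurable_one.indicator (hmeas _ Q'.2.1)).const_mul _)
  have hint : ∀ (R : Set X) (ρ : Measure X),
      ∫⁻ x, f R x ∂ρ = ∑ Q' ∈ T.filter (fun Q' => Q'.1 ⊆ R), g Q' * ρ Q'.1 := by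
    intro R ρ
    rw [hf]
    rw [lintegral_finset_sum _ fun Q' _ =>
      ((measurable_one.indicator (hmeas _ Q'.2.1)).const_mul _)]
    refine Finset.sum_congr rfl fun Q' _ => ?_
    rw [lintegral_const_mul _ (measurable_one.indicator (hmeas _ Q'.2.1)),
      lintegral_indicator_one (hmeas _ Q'.2.1)]
  -- the good sets
  set Bad : Set X → Set X := fun R => R ∩ {x | s < f R x} with hBad
  set Egood : Set X → Set X := fun R => R \ Bad R with hE
  have hBadmeas : ∀ R ∈ DQ0, MeasurableSet (Bad R) := fun R hR =>
    (hmeas R hR).inter (measurableSet_lt measurable_const (hfmeas R))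
  have hEmeas : ∀ R ∈ DQ0, MeasurableSet (Egood R) := fun R hR =>
    (hmeas R hR).diff (hBadmeas R hR)
  -- Chebyshev bound on the bad set, for cubes of the family T
  have hνE : ∀ Q'' : {Q' // Q' ∈ DQ0 ∧ Q' ⊆ Q}, c2 * ν Q''.1 ≤ ν (Egood Q''.1) := by
    intro Q''
    set R := Q''.1 with hRdef
    have hR : R ∈ DQ0 := Q''.2.1
    have hμR0 : μ R ≠ 0 := (hμ R hR).1.ne'
    have hμRt : μ R ≠ ⊤ := (hμ R hR).2.ne
    have hBadR : μ (Bad R) < c1 * μ R := by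
      have h1 : μ (Bad R) ≤ (∫⁻ x, f R x ∂μ) / s := by
        refine le_trans (measure_mono ?_) (meas_ge_le_lintegral_div (hfmeas R).aemeasurable hs0 hst)
        exact fun x hx => show s ≤ f R x from le_of_lt hx.2
      have h2 : ∫⁻ x, f R x ∂μ ≤ M * μ R := by
        rw [hint R μ]
        have h3 : ∑ Q' ∈ T.filter (fun Q' => Q'.1 ⊆ R), g Q' * μ Q'.1 ≤
            ∑' y : {Q' // Q' ∈ DQ0 ∧ Q' ⊆ R}, ENNReal.ofReal (γ y.1) * μ y.1 :=
          finsum_le_tsum_aux DQ0 Q R (fun S => ENNReal.ofReal (γ S) * μ S) _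
            (fun x hx => (Finset.mem_filter.1 hx).2)
        refine h3.trans ?_
        have h4 : (∑' y : {Q' // Q' ∈ DQ0 ∧ Q' ⊆ R},
            ENNReal.ofReal (γ y.1) * μ y.1) / μ R ≤ M := by
          rw [hM]
          exact le_iSup₂ (f := fun R (_ : R ∈ DQ0) => (∑' y : {Q' // Q' ∈ DQ0 ∧ Q' ⊆ R},
            ENNReal.ofReal (γ y.1) * μ y.1) / μ R) R hR
        exact (ENNReal.div_le_iff hμR0 hμRt).1 h4
      calc μ (Bad R) ≤ (∫⁻ x, f R x ∂μ) / s := h1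
        _ ≤ (M * μ R) / s := ENNReal.div_le_div_right h2 s
        _ < c1 * μ R := by
            rw [ENNReal.div_lt_iff (Or.inl hs0) (Or.inl hst)]
            calc M * μ R < (s * c1) * μ R :=
                ENNReal.mul_lt_mul_left hμR0 hμRt hMlt
              _ = c1 * μ R * s := by ring
    have hBadsub : Bad R ⊆ R := inter_subset_left
    have hBadfin : μ (Bad R) ≠ ⊤ := ((measure_mono hBadsub).trans_lt (hμ R hR).2).ne
    have hEμ : μ (Egood R) = μ R - μ (Bad R) :=
      measure_diff hBadsub (hBadmeas R hR).nullMeasurableSet hBadfin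
    have haE : ENNReal.ofReal a < μ (Egood R) / μ R := by
      rw [ENNReal.lt_div_iff_mul_lt (Or.inl hμR0) (Or.inl hμRt), hEμ, lt_tsub_iff_right]
      calc ENNReal.ofReal a * μ R + μ (Bad R)
          < ENNReal.ofReal a * μ R + c1 * μ R :=
            ENNReal.add_lt_add_left (ENNReal.mul_ne_top ENNReal.ofReal_ne_top hμRt) hBadR
        _ = μ R := by
            rw [← add_mul, hc1, ← ENNReal.ofReal_add ha0 (by linarith)]
            norm_num
    have := hab R hR (Egood R) diff_subset (hEmeas R hR) haE
    exact (ENNReal.le_div_iff_mul_le (Or.inl (hν R hR).1.ne') (Or.inl (hν R hR).2.ne)).1 this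
  -- pointwise bound for the overlap of the good sets
  have hpoint : ∀ x : X, ∑ Q'' ∈ T, g Q'' * (Egood Q''.1).indicator 1 x ≤
      Q.indicator (fun _ => s) x := by
    intro x
    by_cases hx : x ∈ Q
    · rw [indicator_of_mem hx]
      have hterm : ∀ Q'' : {Q' // Q' ∈ DQ0 ∧ Q' ⊆ Q},
          g Q'' * (Egood Q''.1).indicator 1 x =
            if x ∈ Egood Q''.1 then g Q'' else 0 := by
        intro Q''
        by_cases h : x ∈ Egood Q''.1 <;>
          simp [indicator_of_mem, indicator_of_notMem, h]
      rw [Finset.sum_congr rfl fun Q'' _ => hterm Q'', ← Finset.sum_filter]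
      set S := T.filter (fun Q'' => x ∈ Egood Q''.1) with hS
      rcases S.eq_empty_or_nonempty with hSe | hSne
      · rw [hSe]; simp
      obtain ⟨m, hmS, hmax⟩ := S.exists_maximal hSne
      have hxm : x ∈ Egood m.1 := (Finset.mem_filter.1 hmS).2
      have hxm1 : x ∈ m.1 := hxm.1
      have hsub : ∀ Q'' ∈ S, Q''.1 ⊆ m.1 := by
        intro Q'' hQ''
        have hx'' : x ∈ Q''.1 := ((Finset.mem_filter.1 hQ'').2).1
        rcases hlam Q''.1 Q''.2.1 m.1 m.2.1 with h | h | h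
        · exact h
        · have hle : m ≤ Q'' := h
          rcases lt_or_eq_of_le hle with hlt | heq
          · exact absurd hlt (not_lt_of_ge (hmax hQ'' hle))
          · rw [← heq]
        · exact absurd (mem_inter hx'' hxm1) (by rw [h]; exact notMem_empty x)
      have h1 : ∑ Q'' ∈ S, g Q'' ≤ f m.1 x := by
        rw [hf]
        have h2 : ∀ Q'' ∈ S, g Q'' = g Q'' * Q''.1.indicator 1 x := by
          intro Q'' hQ''
          rw [indicator_of_mem ((Finset.mem_filter.1 hQ'').2).1]
          simp
        rw [Finset.sum_congr rfl h2]
        refine Finset.sum_le_sum_of_subset ?_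
        intro Q'' hQ''
        exact Finset.mem_filter.2 ⟨(Finset.mem_filter.1 hQ'').1, hsub Q'' hQ''⟩
      have h3 : f m.1 x ≤ s := by
        by_contra hcon
        exact hxm.2 ⟨hxm1, lt_of_not_ge hcon⟩
      exact h1.trans h3
    · rw [indicator_of_notMem hx]
      refine le_of_eq (Finset.sum_eq_zero fun Q'' _ => ?_)
      rw [indicator_of_notMem (fun h => hx (Q''.2.2 (h.1 : x ∈ Q''.1))), mul_zero]
  -- the main estimate
  have hkey : c2 * ∑ Q'' ∈ T, g Q'' * ν Q''.1 ≤ s * ν Q := by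
    calc c2 * ∑ Q'' ∈ T, g Q'' * ν Q''.1
        = ∑ Q'' ∈ T, g Q'' * (c2 * ν Q''.1) := by
          rw [Finset.mul_sum]; exact Finset.sum_congr rfl fun _ _ => by ring
      _ ≤ ∑ Q'' ∈ T, g Q'' * ν (Egood Q''.1) :=
          Finset.sum_le_sum fun Q'' _ => mul_le_mul_right (hνE Q'') _
      _ = ∫⁻ x, (∑ Q'' ∈ T, g Q'' * (Egood Q''.1).indicator 1 x) ∂ν := by
          rw [lintegral_finset_sum _ fun Q'' _ =>
            ((measurable_one.indicator (hEmeas _ Q''.2.1)).const_mul _)]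
          refine (Finset.sum_congr rfl fun Q'' _ => ?_).symm
          rw [lintegral_const_mul _ (measurable_one.indicator (hEmeas _ Q''.2.1)),
            lintegral_indicator_one (hEmeas _ Q''.2.1)]
      _ ≤ ∫⁻ x, Q.indicator (fun _ => s) x ∂ν := lintegral_mono hpoint
      _ = s * ν Q := lintegral_indicator_const (hmeas Q hQ) s
  -- conclude
  have hX : ∑ Q'' ∈ T, g Q'' * ν Q''.1 ≤ s * ν Q / c2 :=
    (ENNReal.le_div_iff_mul_le (Or.inl hc20) (Or.inl hc2t)).2 (by rwa [mul_comm])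
  refine hX.trans (le_of_eq ?_)
  rw [hs, add_mul, ENNReal.add_div]
  congr 1
  · rw [div_eq_mul_inv M c1, div_eq_mul_inv _ c2, div_eq_mul_inv M (c1 * c2),
      ENNReal.mul_inv (Or.inl hc10) (Or.inl hc1t)]
    ring
  · rw [hδ, ENNReal.div_mul_cancel hνQ0 hνQt, mul_div_assoc,
      ENNReal.div_self hc20 hc2t, mul_one]

/-- **Comparison of discrete Carleson norms with respect to comparable measures**
(Lemma `lemma:Carleson-mu-nu` of the paper).  If `μ, ν` are finite and positive on
the cubes of `𝔻_{Q⁰}` and satisfy the `A∞`-type condition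
`μ(F)/μ(Q) > α ⟹ ν(F)/ν(Q) ≥ β`, then for any sequence `γ` of nonnegative numbers,
`(1-α)β ⦀γ⦀_μ ≤ ⦀γ⦀_ν ≤ ((1-α)β)⁻¹ ⦀γ⦀_μ`, where
`⦀γ⦀_ρ := sup_{Q ∈ 𝔻_{Q⁰}} ρ(Q)⁻¹ ∑_{Q' ∈ 𝔻_Q} γ_{Q'} ρ(Q')`. -/
theorem carleson_norm_comparison {n : ℕ}
    (E : Set (EuclideanSpace ℝ (Fin (n + 1)))) (D : DyadicGrid E)
    (Q0 : Set (EuclideanSpace ℝ (Fin (n + 1))))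
    (DQ0 : Set (Set (EuclideanSpace ℝ (Fin (n + 1)))))
    (hQ0 : IsLocalizedFamily D Q0 DQ0)
    (μ ν : Measure (EuclideanSpace ℝ (Fin (n + 1))))
    (hμ : ∀ Q ∈ DQ0, 0 < μ Q ∧ μ Q < ⊤)
    (hν : ∀ Q ∈ DQ0, 0 < ν Q ∧ ν Q < ⊤)
    (a b : ℝ) (ha0 : 0 < a) (ha1 : a < 1) (hb0 : 0 < b) (hb1 : b < 1)
    (hab : ∀ Q ∈ DQ0, ∀ F ⊆ Q, MeasurableSet F →
      ENNReal.ofReal a < μ F / μ Q → ENNReal.ofReal b ≤ ν F / ν Q)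
    (γ : Set (EuclideanSpace ℝ (Fin (n + 1))) → ℝ) (hγ : ∀ Q ∈ DQ0, 0 ≤ γ Q) :
    ENNReal.ofReal ((1 - a) * b) *
        (⨆ Q ∈ DQ0,
          (∑' Q' : {Q' // Q' ∈ DQ0 ∧ Q' ⊆ Q}, ENNReal.ofReal (γ Q'.1) * μ Q'.1) / μ Q) ≤
      (⨆ Q ∈ DQ0,
        (∑' Q' : {Q' // Q' ∈ DQ0 ∧ Q' ⊆ Q}, ENNReal.ofReal (γ Q'.1) * ν Q'.1) / ν Q) ∧
    (⨆ Q ∈ DQ0,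
        (∑' Q' : {Q' // Q' ∈ DQ0 ∧ Q' ⊆ Q}, ENNReal.ofReal (γ Q'.1) * ν Q'.1) / ν Q) ≤
      (⨆ Q ∈ DQ0,
        (∑' Q' : {Q' // Q' ∈ DQ0 ∧ Q' ⊆ Q}, ENNReal.ofReal (γ Q'.1) * μ Q'.1) / μ Q) /
        ENNReal.ofReal ((1 - a) * b) := by
  classical
  have hsub : DQ0 ⊆ ⋃ k : ℤ, D.cubes k := by
    rcases hQ0 with ⟨_, hD⟩ | ⟨k0, _, hD⟩
    · rw [hD]
    · rw [hD]; rintro Q ⟨k, _, hQk, _⟩; exact Set.mem_iUnion.2 ⟨k, hQk⟩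
  have hmeas : ∀ Q ∈ DQ0, MeasurableSet Q := by
    intro Q hQ
    obtain ⟨k, hk⟩ := Set.mem_iUnion.1 (hsub hQ)
    exact D.borel k Q hk
  have hlam : ∀ Q1 ∈ DQ0, ∀ Q2 ∈ DQ0, Q1 ⊆ Q2 ∨ Q2 ⊆ Q1 ∨ Q1 ∩ Q2 = ∅ := by
    intro Q1 h1 Q2 h2
    obtain ⟨k1, hk1⟩ := Set.mem_iUnion.1 (hsub h1)
    obtain ⟨k2, hk2⟩ := Set.mem_iUnion.1 (hsub h2)
    rcases le_total k2 k1 with h | h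
    · rcases D.nested h Q1 hk1 Q2 hk2 with hh | hh
      · exact Or.inl hh
      · exact Or.inr (Or.inr hh)
    · rcases D.nested h Q2 hk2 Q1 hk1 with hh | hh
      · exact Or.inr (Or.inl hh)
      · exact Or.inr (Or.inr (by rw [Set.inter_comm]; exact hh))
  constructor
  · -- lower bound, via the core lemma with the roles of `μ` and `ν` swapped
    have hab' : ∀ Q ∈ DQ0, ∀ F, F ⊆ Q → MeasurableSet F →
        ENNReal.ofReal (1 - b) < ν F / ν Q → ENNReal.ofReal (1 - a) ≤ μ F / μ Q := by
      intro Q hQ F hF hFm h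
      have hμQ0 : μ Q ≠ 0 := (hμ Q hQ).1.ne'
      have hμQt : μ Q ≠ ⊤ := (hμ Q hQ).2.ne
      have hνQ0 : ν Q ≠ 0 := (hν Q hQ).1.ne'
      have hνQt : ν Q ≠ ⊤ := (hν Q hQ).2.ne
      by_contra hcon
      have hlt : μ F / μ Q < ENNReal.ofReal (1 - a) := lt_of_not_ge hcon
      have hμF : μ F < ENNReal.ofReal (1 - a) * μ Q :=
        (ENNReal.div_lt_iff (Or.inl hμQ0) (Or.inl hμQt)).1 hlt
      have hμFt : μ F ≠ ⊤ := ((measure_mono hF).trans_lt (hμ Q hQ).2).ne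
      have hG : μ (Q \ F) = μ Q - μ F := measure_diff hF hFm.nullMeasurableSet hμFt
      have haG : ENNReal.ofReal a < μ (Q \ F) / μ Q := by
        rw [ENNReal.lt_div_iff_mul_lt (Or.inl hμQ0) (Or.inl hμQt), hG, lt_tsub_iff_right]
        calc ENNReal.ofReal a * μ Q + μ F
            < ENNReal.ofReal a * μ Q + ENNReal.ofReal (1 - a) * μ Q :=
              ENNReal.add_lt_add_left (ENNReal.mul_ne_top ENNReal.ofReal_ne_top hμQt) hμF
          _ = μ Q := by
              rw [← add_mul, ← ENNReal.ofReal_add ha0.le (by linarith)]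
              norm_num
      have hbG := hab Q hQ (Q \ F) Set.diff_subset ((hmeas Q hQ).diff hFm) haG
      have hbG' : ENNReal.ofReal b * ν Q ≤ ν (Q \ F) :=
        (ENNReal.le_div_iff_mul_le (Or.inl hνQ0) (Or.inl hνQt)).1 hbG
      have hνF : ν F ≤ ENNReal.ofReal (1 - b) * ν Q := by
        have h1 : ν (Q \ (Q \ F)) = ν Q - ν (Q \ F) :=
          measure_diff Set.diff_subset ((hmeas Q hQ).diff hFm).nullMeasurableSet
            (((measure_mono Set.diff_subset).trans_lt (hν Q hQ).2).ne)
        rw [Set.diff_diff_cancel_left hF] at h1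
        rw [h1]
        calc ν Q - ν (Q \ F) ≤ ν Q - ENNReal.ofReal b * ν Q := tsub_le_tsub_left hbG' _
          _ = (1 - ENNReal.ofReal b) * ν Q := by
              rw [ENNReal.sub_mul (fun _ _ => hνQt), one_mul]
          _ = ENNReal.ofReal (1 - b) * ν Q := by
              rw [ENNReal.ofReal_sub 1 hb0.le, ENNReal.ofReal_one]
      have hfin : ν F / ν Q ≤ ENNReal.ofReal (1 - b) :=
        (ENNReal.div_le_iff hνQ0 hνQt).2 hνF
      exact absurd h (not_lt.2 hfin)
    have hcore := carleson_core DQ0 hmeas hlam ν μ hν hμ (1 - b) (1 - a)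
      (by linarith) (by linarith) (by linarith) hab' γ
    have heq : (1 - (1 - b)) * (1 - a) = (1 - a) * b := by ring
    rw [heq] at hcore
    exact le_trans (mul_le_mul_right hcore _) ENNReal.mul_div_le
  · exact carleson_core DQ0 hmeas hlam μ ν hμ hν a b ha0.le ha1 hb0 hab γ
end

section
/- Let E ⊆ ℝ^{n+1}, let 𝔻 = ⋃_{k∈ℤ} 𝔻_k be a dyadic grid on E, and fix Q⁰ which is either E or a cube of 𝔻. Let μ be a nonnegative dyadically doubling Borel measure on Q⁰ with 0 < μ(Q) < ∞ for every Q ∈ 𝔻_{Q⁰}, let ν be a nonnegative Borel measure on Q⁰ with 0 < ν(Q) < ∞ for every Q ∈ 𝔻_{Q⁰}, and let ℱ = {Q_i} ⊆ 𝔻_{Q⁰} be a family of pairwise disjoint cubes. If ν ∈ A∞^{dyadic}(Q⁰, μ), then 𝒫^μ_ℱ ν ∈ A∞^{dyadic}(Q⁰, μ). -/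
open Metric MeasureTheory
open scoped ENNReal

/-- A set function `ρ` (e.g. a measure, or a projected measure) is *dyadically
doubling* on the cubes of `DQ0`: there is `C ≥ 1` such that `ρ(Q) ≤ C ρ(Q')`
whenever `Q, Q' ∈ DQ0` with `Q' ⊆ Q` and `ℓ(Q) = 2ℓ(Q')` (i.e. `Q` is of some
generation `k` and `Q'` of generation `k+1`). -/
def DyadicallyDoubling {n : ℕ} {E : Set (EuclideanSpace ℝ (Fin (n + 1)))}
    (D : DyadicGrid E) (DQ0 : Set (Set (EuclideanSpace ℝ (Fin (n + 1)))))
    (ρ : Set (EuclideanSpace ℝ (Fin (n + 1))) → ℝ≥0∞) : Prop :=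
  ∃ C : ℝ, 1 ≤ C ∧ ∀ k : ℤ, ∀ Q ∈ D.cubes k, ∀ Q' ∈ D.cubes (k + 1),
    Q ∈ DQ0 → Q' ∈ DQ0 → Q' ⊆ Q → ρ Q ≤ ENNReal.ofReal C * ρ Q'

/-- A set function `ρ` belongs to `A∞^{dyadic}(Q⁰, μ)` if there exist
`0 < α, β < 1` such that for every `Q ∈ 𝔻_{Q⁰}` and every Borel `F ⊆ Q`,
`μ(F)/μ(Q) > α` implies `ρ(F)/ρ(Q) > β`. -/
def AInftyDyadic {n : ℕ}
    (DQ0 : Set (Set (EuclideanSpace ℝ (Fin (n + 1)))))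
    (μ : Measure (EuclideanSpace ℝ (Fin (n + 1))))
    (ρ : Set (EuclideanSpace ℝ (Fin (n + 1))) → ℝ≥0∞) : Prop :=
  ∃ a b : ℝ, 0 < a ∧ a < 1 ∧ 0 < b ∧ b < 1 ∧
    ∀ Q ∈ DQ0, ∀ F ⊆ Q, MeasurableSet F →
      ENNReal.ofReal a < μ F / μ Q → ENNReal.ofReal b < ρ F / ρ Q

/-- The projection `𝒫^μ_ℱ ν` of `ν` with respect to a pairwise disjoint family of
cubes `ℱ`: `𝒫^μ_ℱ ν(A) = ν(A \ ⋃ᵢ Qᵢ) + ∑ᵢ (μ(A ∩ Qᵢ)/μ(Qᵢ)) ν(Qᵢ)`. -/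
noncomputable def dyadicProjection {n : ℕ}
    (μ ν : Measure (EuclideanSpace ℝ (Fin (n + 1))))
    (F : Set (Set (EuclideanSpace ℝ (Fin (n + 1)))))
    (A : Set (EuclideanSpace ℝ (Fin (n + 1)))) : ℝ≥0∞ :=
  ν (A \ ⋃₀ F) + ∑' Qi : F, (μ (A ∩ Qi.1) / μ Qi.1) * ν Qi.1

section Aux

variable {n : ℕ} {E : Set (EuclideanSpace ℝ (Fin (n + 1)))} {D : DyadicGrid E}
  {Q0 : Set (EuclideanSpace ℝ (Fin (n + 1)))}
  {DQ0 : Set (Set (EuclideanSpace ℝ (Fin (n + 1))))}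

lemma DyadicGrid.mem_grid_of_mem (hQ0 : IsLocalizedFamily D Q0 DQ0)
    {Q : Set (EuclideanSpace ℝ (Fin (n + 1)))} (hQ : Q ∈ DQ0) :
    ∃ k : ℤ, Q ∈ D.cubes k := by
  rcases hQ0 with ⟨-, rfl⟩ | ⟨k0, -, rfl⟩
  · simpa using hQ
  · obtain ⟨k, -, hk, -⟩ := hQ
    exact ⟨k, hk⟩

lemma DyadicGrid.measurable_of_mem (hQ0 : IsLocalizedFamily D Q0 DQ0)
    {Q : Set (EuclideanSpace ℝ (Fin (n + 1)))} (hQ : Q ∈ DQ0) :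
    MeasurableSet Q := by
  obtain ⟨k, hk⟩ := DyadicGrid.mem_grid_of_mem hQ0 hQ
  exact D.borel k Q hk

lemma DyadicGrid.trichotomy (hQ0 : IsLocalizedFamily D Q0 DQ0)
    {Q Q' : Set (EuclideanSpace ℝ (Fin (n + 1)))} (hQ : Q ∈ DQ0) (hQ' : Q' ∈ DQ0) :
    Q ⊆ Q' ∨ Q' ⊆ Q ∨ Q ∩ Q' = ∅ := by
  obtain ⟨k, hk⟩ := DyadicGrid.mem_grid_of_mem hQ0 hQ
  obtain ⟨j, hj⟩ := DyadicGrid.mem_grid_of_mem hQ0 hQ'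
  rcases le_total j k with h | h
  · rcases D.nested h Q hk Q' hj with h1 | h1
    · exact Or.inl h1
    · exact Or.inr (Or.inr h1)
  · rcases D.nested h Q' hj Q hk with h1 | h1
    · exact Or.inr (Or.inl h1)
    · exact Or.inr (Or.inr (by rw [Set.inter_comm]; exact h1))

lemma DyadicGrid.countable_of_subset (hQ0 : IsLocalizedFamily D Q0 DQ0)
    {F : Set (Set (EuclideanSpace ℝ (Fin (n + 1))))} (hF : F ⊆ DQ0) :
    F.Countable := by
  refine D.countable.mono fun Q hQ => ?_
  obtain ⟨k, hk⟩ := DyadicGrid.mem_grid_of_mem hQ0 (hF hQ)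
  exact Set.mem_iUnion.mpr ⟨k, hk⟩

end Aux

/-- **The projection of an `A∞^{dyadic}` measure is `A∞^{dyadic}`**
(Lemma `lemm_w-Pw-:properties` (b) of the paper). -/
theorem projection_Ainfty_dyadic {n : ℕ}
    (E : Set (EuclideanSpace ℝ (Fin (n + 1)))) (D : DyadicGrid E)
    (Q0 : Set (EuclideanSpace ℝ (Fin (n + 1))))
    (DQ0 : Set (Set (EuclideanSpace ℝ (Fin (n + 1)))))
    (hQ0 : IsLocalizedFamily D Q0 DQ0)
    (μ ν : Measure (EuclideanSpace ℝ (Fin (n + 1))))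
    (hμfin : ∀ Q ∈ DQ0, 0 < μ Q ∧ μ Q < ⊤)
    (hνfin : ∀ Q ∈ DQ0, 0 < ν Q ∧ ν Q < ⊤)
    (hμd : DyadicallyDoubling D DQ0 (fun A => μ A))
    (F : Set (Set (EuclideanSpace ℝ (Fin (n + 1)))))
    (hF : F ⊆ DQ0) (hFdisj : F.PairwiseDisjoint id)
    (hν : AInftyDyadic DQ0 μ (fun A => ν A)) :
    AInftyDyadic DQ0 μ (dyadicProjection μ ν F) := by
  classical
  obtain ⟨α, β, hα0, hα1, hβ0, hβ1, hA⟩ := hν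
  set a' : ℝ := (1 + α) / 2 with ha'def
  set γ : ℝ := (1 - α) / 4 with hγdef
  have ha'0 : 0 < a' := by simp only [ha'def]; linarith
  have ha'1 : a' < 1 := by simp only [ha'def]; linarith
  have hγ0 : 0 < γ := by simp only [hγdef]; linarith
  have hγ1 : γ < 1 := by simp only [hγdef]; linarith
  have hmin0 : 0 < min a' (γ * β) := lt_min ha'0 (mul_pos hγ0 hβ0)
  set b' : ℝ := min a' (γ * β) / 2 with hb'def
  have hb'0 : 0 < b' := half_pos hmin0
  have hb'a' : b' < a' := lt_of_lt_of_le (half_lt_self hmin0) (min_le_left _ _)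
  have hb'γβ : b' < γ * β := lt_of_lt_of_le (half_lt_self hmin0) (min_le_right _ _)
  have hb'1 : b' < 1 := hb'a'.trans ha'1
  refine ⟨a', b', ha'0, ha'1, hb'0, hb'1, ?_⟩
  intro Q hQ G hGQ hGmeas hG
  have hμQ := hμfin Q hQ
  have hνQ := hνfin Q hQ
  have hQmeas : MeasurableSet Q := DyadicGrid.measurable_of_mem hQ0 hQ
  have hFcount : F.Countable := DyadicGrid.countable_of_subset hQ0 hF
  haveI : Countable ↥F := hFcount.to_subtype
  have hFmeas : ∀ i ∈ F, MeasurableSet i := fun i hi => DyadicGrid.measurable_of_mem hQ0 (hF hi)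
  have hsUF : MeasurableSet (⋃₀ F) := MeasurableSet.sUnion hFcount hFmeas
  -- ne-of-coe disjointness helper
  have hdisj' : ∀ (i j : F), (i : Set (EuclideanSpace ℝ (Fin (n + 1)))) ≠
      (j : Set (EuclideanSpace ℝ (Fin (n + 1)))) →
      Disjoint (i : Set (EuclideanSpace ℝ (Fin (n + 1)))) (j : Set (EuclideanSpace ℝ (Fin (n + 1)))) :=
    fun i j hij => hFdisj i.2 j.2 hij
  by_cases hcase : ∃ Qi ∈ F, Q ⊆ Qi
  · -- Case A : Q is contained in some cube of the family
    obtain ⟨Qi, hQiF, hQQi⟩ := hcase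
    have hμQi := hμfin Qi (hF hQiF)
    have hνQi := hνfin Qi (hF hQiF)
    have key : ∀ A ⊆ Qi, dyadicProjection μ ν F A = μ A / μ Qi * ν Qi := by
      intro A hA
      have h1 : A \ ⋃₀ F = ∅ :=
        Set.diff_eq_empty.mpr (hA.trans (Set.subset_sUnion_of_mem hQiF))
      have h2 : ∑' (j : F), μ (A ∩ (j : Set _)) / μ (j : Set _) * ν (j : Set _)
          = μ (A ∩ Qi) / μ Qi * ν Qi := by
        refine tsum_eq_single (⟨Qi, hQiF⟩ : F) ?_
        intro j hj
        have hne : (j : Set _) ≠ Qi := fun h => hj (Subtype.ext h)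
        have hd : Disjoint (j : Set _) Qi := hdisj' j ⟨Qi, hQiF⟩ hne
        have hAj : A ∩ (j : Set _) = ∅ := by
          apply Set.eq_empty_iff_forall_notMem.mpr
          intro x hx
          exact (Set.disjoint_right.mp hd (hA hx.1)) hx.2
        simp [hAj]
      rw [dyadicProjection, h1, h2, Set.inter_eq_left.mpr hA]
      simp
    rw [key G (hGQ.trans hQQi), key Q hQQi]
    have hratio : μ G / μ Qi * ν Qi / (μ Q / μ Qi * ν Qi) = μ G / μ Q := by
      rw [ENNReal.mul_div_mul_right _ _ hνQi.1.ne' hνQi.2.ne,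
        div_eq_mul_inv (μ G), div_eq_mul_inv (μ Q),
        ENNReal.mul_div_mul_right _ _ (ENNReal.inv_ne_zero.mpr hμQi.2.ne)
          (ENNReal.inv_ne_top.mpr hμQi.1.ne')]
    rw [hratio]
    exact lt_trans ((ENNReal.ofReal_lt_ofReal_iff ha'0).mpr hb'a') hG
  · -- Case B : every cube of the family is inside Q or disjoint from Q
    push_neg at hcase
    have hsub : ∀ Qi ∈ F, Qi ⊆ Q ∨ Qi ∩ Q = ∅ := by
      intro Qi hi
      rcases DyadicGrid.trichotomy hQ0 (hF hi) hQ with h | h | h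
      · exact Or.inl h
      · exact absurd h (hcase Qi hi)
      · exact Or.inr h
    set Good : Set (Set (EuclideanSpace ℝ (Fin (n + 1)))) :=
      {Qi | Qi ∈ F ∧ Qi ⊆ Q ∧ ENNReal.ofReal γ * μ Qi < μ (G ∩ Qi)} with hGooddef
    have hGoodF : Good ⊆ F := fun i hi => hi.1
    set S : Set (EuclideanSpace ℝ (Fin (n + 1))) := ⋃₀ Good with hSdef
    have hSmeas : MeasurableSet S :=
      MeasurableSet.sUnion (hFcount.mono hGoodF) (fun i hi => hFmeas i hi.1)
    have hSQ : S ⊆ Q := Set.sUnion_subset fun i hi => hi.2.1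
    have hSF : S ⊆ ⋃₀ F := Set.sUnion_subset fun i hi => Set.subset_sUnion_of_mem hi.1
    set E' : Set (EuclideanSpace ℝ (Fin (n + 1))) := (G \ ⋃₀ F) ∪ S with hE'def
    have hE'Q : E' ⊆ Q := Set.union_subset (Set.diff_subset.trans hGQ) hSQ
    have hE'meas : MeasurableSet E' := (hGmeas.diff hsUF).union hSmeas
    have hE'disj : Disjoint (G \ ⋃₀ F) S := (Set.disjoint_sdiff_left).mono_right hSF
    have hμE'eq : μ E' = μ (G \ ⋃₀ F) + μ S := measure_union hE'disj hSmeas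
    have hνE'eq : ν E' = ν (G \ ⋃₀ F) + ν S := measure_union hE'disj hSmeas
    -- sum identity for intersections with a measurable set
    have hsum : ∀ (m : Measure (EuclideanSpace ℝ (Fin (n + 1))))
        (T : Set (EuclideanSpace ℝ (Fin (n + 1)))), MeasurableSet T →
        ∑' i : F, m ((i : Set _) ∩ T) = m (⋃₀ F ∩ T) := by
      intro m T hT
      have hU : ⋃₀ F ∩ T = ⋃ i : F, ((i : Set _) ∩ T) := by
        rw [Set.sUnion_eq_iUnion, Set.iUnion_inter]
      rw [hU]
      have hdisj2 : Pairwise (Function.onFun Disjoint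
          (fun i : F => (i : Set (EuclideanSpace ℝ (Fin (n + 1)))) ∩ T)) := by
        intro i j hij
        have hne : (i : Set (EuclideanSpace ℝ (Fin (n + 1)))) ≠ j := fun h => hij (Subtype.ext h)
        exact (hdisj' i j hne).mono Set.inter_subset_left Set.inter_subset_left
      exact (measure_iUnion hdisj2 (fun i : F => (hFmeas i.1 i.2).inter hT)).symm
    -- (I) : the projection of Q is at most ν Q
    have hPQ : dyadicProjection μ ν F Q ≤ ν Q := by
      have hpt : ∀ i : F, μ (Q ∩ (i : Set _)) / μ (i : Set _) * ν (i : Set _)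
          ≤ ν ((i : Set _) ∩ Q) := by
        intro i
        rcases hsub i i.2 with h | h
        · have h1 : Q ∩ (i : Set _) = (i : Set _) := Set.inter_eq_right.mpr h
          have h2 : (i : Set _) ∩ Q = (i : Set _) := Set.inter_eq_left.mpr h
          rw [h1, h2, ENNReal.div_self (hμfin _ (hF i.2)).1.ne' (hμfin _ (hF i.2)).2.ne,
            one_mul]
        · have h1 : Q ∩ (i : Set _) = ∅ := by rw [Set.inter_comm]; exact h
          simp [h1]
      calc dyadicProjection μ ν F Q
          ≤ ν (Q \ ⋃₀ F) + ∑' i : F, ν ((i : Set _) ∩ Q) := by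
            exact add_le_add le_rfl (Summable.tsum_le_tsum hpt ENNReal.summable ENNReal.summable)
        _ = ν (Q \ ⋃₀ F) + ν (⋃₀ F ∩ Q) := by rw [hsum ν Q hQmeas]
        _ = ν (Q ∩ ⋃₀ F) + ν (Q \ ⋃₀ F) := by rw [Set.inter_comm, add_comm]
        _ = ν Q := measure_inter_add_diff Q hsUF
    -- (II) : μ G ≤ μ E' + γ μ Q
    have hμG : μ G ≤ μ E' + ENNReal.ofReal γ * μ Q := by
      have hpt : ∀ i : F, μ ((i : Set _) ∩ G)
          ≤ μ ((i : Set _) ∩ S) + ENNReal.ofReal γ * μ ((i : Set _) ∩ Q) := by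
        intro i
        by_cases hi : (i : Set _) ∈ Good
        · have hiS : (i : Set _) ∩ S = (i : Set _) :=
            Set.inter_eq_left.mpr (Set.subset_sUnion_of_mem hi)
          calc μ ((i : Set _) ∩ G) ≤ μ (i : Set _) := measure_mono Set.inter_subset_left
            _ = μ ((i : Set _) ∩ S) := by rw [hiS]
            _ ≤ _ := le_self_add
        · rcases hsub i i.2 with h | h
          · have h3 : μ (G ∩ (i : Set _)) ≤ ENNReal.ofReal γ * μ (i : Set _) :=
              not_lt.mp (fun hlt => hi ⟨i.2, h, hlt⟩)
            have hiQ : (i : Set _) ∩ Q = (i : Set _) := Set.inter_eq_left.mpr h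
            calc μ ((i : Set _) ∩ G) = μ (G ∩ (i : Set _)) := by rw [Set.inter_comm]
              _ ≤ ENNReal.ofReal γ * μ ((i : Set _) ∩ Q) := by rw [hiQ]; exact h3
              _ ≤ _ := le_add_self
          · have h1 : (i : Set _) ∩ G = ∅ := by
              apply Set.eq_empty_iff_forall_notMem.mpr
              intro x hx
              have : x ∈ (i : Set _) ∩ Q := ⟨hx.1, hGQ hx.2⟩
              rw [h] at this
              exact this
            simp [h1]
      have hGsplit : μ (G ∩ ⋃₀ F) + μ (G \ ⋃₀ F) = μ G := measure_inter_add_diff G hsUF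
      have h2 : μ (G ∩ ⋃₀ F) ≤ μ S + ENNReal.ofReal γ * μ Q := by
        calc μ (G ∩ ⋃₀ F) = μ (⋃₀ F ∩ G) := by rw [Set.inter_comm]
          _ = ∑' i : F, μ ((i : Set _) ∩ G) := (hsum μ G hGmeas).symm
          _ ≤ ∑' i : F, (μ ((i : Set _) ∩ S) + ENNReal.ofReal γ * μ ((i : Set _) ∩ Q)) :=
              Summable.tsum_le_tsum hpt ENNReal.summable ENNReal.summable
          _ = (∑' i : F, μ ((i : Set _) ∩ S))
              + ENNReal.ofReal γ * ∑' i : F, μ ((i : Set _) ∩ Q) := by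
              rw [ENNReal.tsum_add, ENNReal.tsum_mul_left]
          _ = μ (⋃₀ F ∩ S) + ENNReal.ofReal γ * μ (⋃₀ F ∩ Q) := by
              rw [hsum μ S hSmeas, hsum μ Q hQmeas]
          _ ≤ μ S + ENNReal.ofReal γ * μ Q := by
              exact add_le_add (measure_mono Set.inter_subset_right)
                (mul_le_mul_right (measure_mono Set.inter_subset_right) _)
      calc μ G = μ (G ∩ ⋃₀ F) + μ (G \ ⋃₀ F) := hGsplit.symm
        _ ≤ (μ S + ENNReal.ofReal γ * μ Q) + μ (G \ ⋃₀ F) := add_le_add h2 le_rfl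
        _ = (μ (G \ ⋃₀ F) + μ S) + ENNReal.ofReal γ * μ Q := by ring
        _ = μ E' + ENNReal.ofReal γ * μ Q := by rw [hμE'eq]
    -- (III) : from the hypothesis on G
    have hG' : ENNReal.ofReal a' * μ Q < μ G :=
      (ENNReal.lt_div_iff_mul_lt (Or.inl hμQ.1.ne') (Or.inl hμQ.2.ne)).mp hG
    -- (IV) : μ E' is large
    have hμE' : ENNReal.ofReal α * μ Q < μ E' := by
      by_contra hle
      push_neg at hle
      have h1 : μ G ≤ ENNReal.ofReal (α + γ) * μ Q := by
        calc μ G ≤ μ E' + ENNReal.ofReal γ * μ Q := hμG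
          _ ≤ ENNReal.ofReal α * μ Q + ENNReal.ofReal γ * μ Q := add_le_add hle le_rfl
          _ = (ENNReal.ofReal α + ENNReal.ofReal γ) * μ Q := by rw [add_mul]
          _ = ENNReal.ofReal (α + γ) * μ Q := by rw [ENNReal.ofReal_add hα0.le hγ0.le]
      have h2 : α + γ ≤ a' := by simp only [ha'def, hγdef]; linarith
      have h3 : ENNReal.ofReal (α + γ) * μ Q ≤ ENNReal.ofReal a' * μ Q :=
        mul_le_mul_left (ENNReal.ofReal_le_ofReal h2) _
      exact absurd (hG'.trans_le (h1.trans h3)) (lt_irrefl _)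
    have hμE'div : ENNReal.ofReal α < μ E' / μ Q :=
      (ENNReal.lt_div_iff_mul_lt (Or.inl hμQ.1.ne') (Or.inl hμQ.2.ne)).mpr hμE'
    -- (V) : apply A∞ for ν
    have hνE' : ENNReal.ofReal β < ν E' / ν Q := hA Q hQ E' hE'Q hE'meas hμE'div
    -- (VI) : lower bound for the projection of G
    have hPG : ENNReal.ofReal γ * ν E' ≤ dyadicProjection μ ν F G := by
      have hγ1' : ENNReal.ofReal γ ≤ 1 := ENNReal.ofReal_le_one.mpr hγ1.le
      have hpt : ∀ i : F, ENNReal.ofReal γ * ν ((i : Set _) ∩ S)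
          ≤ μ (G ∩ (i : Set _)) / μ (i : Set _) * ν (i : Set _) := by
        intro i
        by_cases hi : (i : Set _) ∈ Good
        · have hiS : (i : Set _) ∩ S = (i : Set _) :=
            Set.inter_eq_left.mpr (Set.subset_sUnion_of_mem hi)
          rw [hiS]
          have hgd : ENNReal.ofReal γ ≤ μ (G ∩ (i : Set _)) / μ (i : Set _) :=
            (ENNReal.le_div_iff_mul_le (Or.inl (hμfin _ (hF i.2)).1.ne')
              (Or.inl (hμfin _ (hF i.2)).2.ne)).mpr hi.2.2.le
          exact mul_le_mul_left hgd _
        · have hiS : (i : Set _) ∩ S = ∅ := by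
            apply Set.eq_empty_iff_forall_notMem.mpr
            rintro x ⟨hxi, hxS⟩
            obtain ⟨j, hjG, hxj⟩ := hxS
            have hne : (i : Set _) ≠ j := by
              rintro rfl
              exact hi hjG
            exact (Set.disjoint_left.mp (hFdisj i.2 hjG.1 hne) hxi) hxj
          simp [hiS]
      calc ENNReal.ofReal γ * ν E'
          = ENNReal.ofReal γ * ν (G \ ⋃₀ F) + ENNReal.ofReal γ * ν S := by
            rw [hνE'eq, mul_add]
        _ ≤ ν (G \ ⋃₀ F) + ENNReal.ofReal γ * ν S :=
            add_le_add (mul_le_of_le_one_left zero_le hγ1') le_rfl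
        _ = ν (G \ ⋃₀ F) + ENNReal.ofReal γ * ν (⋃₀ F ∩ S) := by
            rw [Set.inter_eq_right.mpr hSF]
        _ = ν (G \ ⋃₀ F) + ∑' i : F, ENNReal.ofReal γ * ν ((i : Set _) ∩ S) := by
            rw [← hsum ν S hSmeas, ENNReal.tsum_mul_left]
        _ ≤ ν (G \ ⋃₀ F)
            + ∑' i : F, μ (G ∩ (i : Set _)) / μ (i : Set _) * ν (i : Set _) :=
            add_le_add le_rfl (Summable.tsum_le_tsum hpt ENNReal.summable ENNReal.summable)
        _ = dyadicProjection μ ν F G := rfl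
    -- (VII) : conclude
    have hγne0 : ENNReal.ofReal γ ≠ 0 := (ENNReal.ofReal_pos.mpr hγ0).ne'
    have hγnetop : ENNReal.ofReal γ ≠ ⊤ := ENNReal.ofReal_ne_top
    calc ENNReal.ofReal b'
        < ENNReal.ofReal (γ * β) := (ENNReal.ofReal_lt_ofReal_iff (mul_pos hγ0 hβ0)).mpr hb'γβ
      _ = ENNReal.ofReal γ * ENNReal.ofReal β := ENNReal.ofReal_mul hγ0.le
      _ < ENNReal.ofReal γ * (ν E' / ν Q) :=
          (ENNReal.mul_lt_mul_iff_right hγne0 hγnetop).mpr hνE'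
      _ = ENNReal.ofReal γ * ν E' / ν Q := (mul_div_assoc _ _ _).symm
      _ ≤ dyadicProjection μ ν F G / ν Q := ENNReal.div_le_div hPG le_rfl
      _ ≤ dyadicProjection μ ν F G / dyadicProjection μ ν F Q :=
          ENNReal.div_le_div_left hPQ _
end

section
/- Let E ⊆ ℝ^{n+1}, let 𝔻 = ⋃_{k∈ℤ} 𝔻_k be a dyadic grid on E, and fix a cube Q₀ ∈ 𝔻. Let μ and ν be nonnegative Borel measures on Q₀ with 0 < μ(Q) < ∞ and 0 < ν(Q) < ∞ for every Q ∈ 𝔻_{Q₀}. Suppose there exist constants q > 1 and C₁, C₂, C₃ ≥ 1 such that for every Q ∈ 𝔻_{Q₀} there is a Borel subset E_Q ⊆ Q with μ(Q) ≤ C₂ μ(E_Q), ν(Q) ≤ C₃ ν(E_Q), and ν(F)/ν(E_Q) ≤ C₁ (μ(F)/μ(E_Q))^{1/q} for every Borel set F ⊆ E_Q. Then there exist constants 0 < α, β < 1, depending only on q, C₁, C₂, C₃, such that for every Q ∈ 𝔻_{Q₀} and every Borel set F ⊆ Q, μ(F)/μ(Q) > α implies ν(F)/ν(Q) > β. -/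
open Metric MeasureTheory
open scoped ENNReal

/-- **Abstract `A∞`-type criterion** (the abstract form of the argument in Step 1
of the proof of the paper's local perturbation result).  Suppose that for every
`Q ∈ 𝔻_{Q₀}` there is a Borel subset `E_Q ⊆ Q` with `μ(Q) ≤ C₂ μ(E_Q)`,
`ν(Q) ≤ C₃ ν(E_Q)`, and `ν(F)/ν(E_Q) ≤ C₁ (μ(F)/μ(E_Q))^{1/q}` for every Borel
`F ⊆ E_Q`.  Then there are `0 < α, β < 1`, depending only on `q, C₁, C₂, C₃`, such
that for every `Q ∈ 𝔻_{Q₀}` and Borel `F ⊆ Q`, `μ(F)/μ(Q) > α` implies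
`ν(F)/ν(Q) > β`. -/
theorem abstract_Ainfty_criterion (q C₁ C₂ C₃ : ℝ)
    (hq : 1 < q) (hC₁ : 1 ≤ C₁) (hC₂ : 1 ≤ C₂) (hC₃ : 1 ≤ C₃) :
    ∃ a b : ℝ, 0 < a ∧ a < 1 ∧ 0 < b ∧ b < 1 ∧
      ∀ (n : ℕ) (E : Set (EuclideanSpace ℝ (Fin (n + 1)))) (D : DyadicGrid E)
        (Q₀ : Set (EuclideanSpace ℝ (Fin (n + 1))))
        (DQ0 : Set (Set (EuclideanSpace ℝ (Fin (n + 1))))),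
        -- `Q₀` is a cube of the grid and `DQ0 = 𝔻_{Q₀}`
        (∃ k0 : ℤ, Q₀ ∈ D.cubes k0 ∧
          DQ0 = {Q | ∃ k : ℤ, k0 ≤ k ∧ Q ∈ D.cubes k ∧ Q ⊆ Q₀}) →
      ∀ μ ν : Measure (EuclideanSpace ℝ (Fin (n + 1))),
        (∀ Q ∈ DQ0, 0 < μ Q ∧ μ Q < ⊤) →
        (∀ Q ∈ DQ0, 0 < ν Q ∧ ν Q < ⊤) →
        (∀ Q ∈ DQ0, ∃ EQ : Set (EuclideanSpace ℝ (Fin (n + 1))),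
          MeasurableSet EQ ∧ EQ ⊆ Q ∧
          μ Q ≤ ENNReal.ofReal C₂ * μ EQ ∧
          ν Q ≤ ENNReal.ofReal C₃ * ν EQ ∧
          ∀ F ⊆ EQ, MeasurableSet F →
            ν F / ν EQ ≤ ENNReal.ofReal C₁ * (μ F / μ EQ) ^ (1 / q)) →
        ∀ Q ∈ DQ0, ∀ F ⊆ Q, MeasurableSet F →
          ENNReal.ofReal a < μ F / μ Q → ENNReal.ofReal b < ν F / ν Q := by

  have hq0 : (0:ℝ) < q := lt_trans one_pos hq
  have hC₁0 : (0:ℝ) < C₁ := lt_of_lt_of_le one_pos hC₁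
  have hC₂0 : (0:ℝ) < C₂ := lt_of_lt_of_le one_pos hC₂
  have hC₃0 : (0:ℝ) < C₃ := lt_of_lt_of_le one_pos hC₃
  set P : ℝ := C₂ * (2 * C₁) ^ q with hPdef
  have h2C₁ : (1:ℝ) ≤ 2 * C₁ := by nlinarith
  have hpow1 : (1:ℝ) ≤ (2 * C₁) ^ q := Real.one_le_rpow h2C₁ hq0.le
  have hpow0 : (0:ℝ) < (2 * C₁) ^ q := lt_of_lt_of_le one_pos hpow1
  have hP1 : (1:ℝ) < P := by
    calc (1:ℝ) < 2 * C₁ := by nlinarith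
    _ = (2 * C₁) ^ (1:ℝ) := (Real.rpow_one _).symm
    _ ≤ (2 * C₁) ^ q := Real.rpow_le_rpow_of_exponent_le h2C₁ hq.le
    _ = 1 * (2 * C₁) ^ q := (one_mul _).symm
    _ ≤ P := by rw [hPdef]; exact mul_le_mul_of_nonneg_right hC₂ hpow0.le
  have hP0 : (0:ℝ) < P := lt_trans one_pos hP1
  have hPinv1 : P⁻¹ < 1 := by
    rw [inv_lt_one_iff₀]; right; exact hP1
  have hPinv0 : (0:ℝ) < P⁻¹ := inv_pos.2 hP0
  -- the key real computation:  C₁ * (P⁻¹ * C₂) ^ (1/q) = 1/2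
  have hkey : C₁ * (P⁻¹ * C₂) ^ (1 / q) = 1 / 2 := by
    have h1 : P⁻¹ * C₂ = (2 * C₁) ^ (-q) := by
      rw [hPdef, mul_inv, ← Real.rpow_neg (by linarith)]
      field_simp
    have h3 : ((2 * C₁) ^ (-q)) ^ (1 / q) = (2 * C₁)⁻¹ := by
      rw [← Real.rpow_mul (by linarith : (0:ℝ) ≤ 2 * C₁),
        show -q * (1 / q) = (-1:ℝ) by field_simp, Real.rpow_neg_one]
    rw [h1, h3]
    field_simp
  refine ⟨1 - P⁻¹, (4 * C₃)⁻¹, by linarith, by linarith,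
    inv_pos.2 (by linarith), by rw [inv_lt_one_iff₀]; right; linarith, ?_⟩
  intro n E D Q₀ DQ0 _ μ ν hμ hν hEQ Q hQ F hFQ hFmeas hμF
  obtain ⟨EQ, hEm, hEsub, hμQE, hνQE, hHolder⟩ := hEQ Q hQ
  obtain ⟨hμQ0, hμQt⟩ := hμ Q hQ
  obtain ⟨hνQ0, hνQt⟩ := hν Q hQ
  have hμE_t : μ EQ ≠ ⊤ := (lt_of_le_of_lt (measure_mono hEsub) hμQt).ne
  have hνE_t : ν EQ ≠ ⊤ := (lt_of_le_of_lt (measure_mono hEsub) hνQt).ne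
  have hμE_0 : μ EQ ≠ 0 := by
    intro h; rw [h, mul_zero, nonpos_iff_eq_zero] at hμQE
    exact hμQ0.ne' hμQE
  have hνE_0 : ν EQ ≠ 0 := by
    intro h; rw [h, mul_zero, nonpos_iff_eq_zero] at hνQE
    exact hνQ0.ne' hνQE
  -- Step 1: μ F > (1 - P⁻¹) μ Q
  have h1 : ENNReal.ofReal (1 - P⁻¹) * μ Q < μ F :=
    (ENNReal.lt_div_iff_mul_lt (Or.inl hμQ0.ne') (Or.inl hμQt.ne)).1 hμF
  -- Step 2: μ (Q \ F) < P⁻¹ μ Q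
  have hsplit : ENNReal.ofReal (1 - P⁻¹) * μ Q + ENNReal.ofReal P⁻¹ * μ Q = μ Q := by
    rw [← add_mul, ← ENNReal.ofReal_add (by linarith) hPinv0.le, sub_add_cancel,
      ENNReal.ofReal_one, one_mul]
  have hdiff : μ (Q \ F) + μ F = μ Q := by
    rw [measure_diff hFQ hFmeas.nullMeasurableSet
      (lt_of_le_of_lt (measure_mono hFQ) hμQt).ne]
    exact tsub_add_cancel_of_le (measure_mono hFQ)
  have h2 : μ (Q \ F) < ENNReal.ofReal P⁻¹ * μ Q := by
    have hfin : μ F ≠ ⊤ := (lt_of_le_of_lt (measure_mono hFQ) hμQt).ne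
    rw [← ENNReal.add_lt_add_iff_right hfin]
    calc μ (Q \ F) + μ F = μ Q := hdiff
      _ = ENNReal.ofReal (1 - P⁻¹) * μ Q + ENNReal.ofReal P⁻¹ * μ Q := hsplit.symm
      _ < μ F + ENNReal.ofReal P⁻¹ * μ Q := by
          exact ENNReal.add_lt_add_right
            (by
              intro h
              exact (lt_of_le_of_lt (le_top.trans_eq h.symm) (lt_top_iff_ne_top.2
                (ENNReal.mul_ne_top ENNReal.ofReal_ne_top hμQt.ne))).false) h1
      _ = ENNReal.ofReal P⁻¹ * μ Q + μ F := add_comm _ _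
  -- Step 3: μ (EQ \ F) ≤ (P⁻¹ C₂) μ EQ
  have h3 : μ (EQ \ F) ≤ ENNReal.ofReal (P⁻¹ * C₂) * μ EQ := by
    calc μ (EQ \ F) ≤ μ (Q \ F) := measure_mono (Set.diff_subset_diff_left hEsub)
      _ ≤ ENNReal.ofReal P⁻¹ * μ Q := h2.le
      _ ≤ ENNReal.ofReal P⁻¹ * (ENNReal.ofReal C₂ * μ EQ) :=
          mul_le_mul_right hμQE _
      _ = ENNReal.ofReal (P⁻¹ * C₂) * μ EQ := by
          rw [← mul_assoc, ← ENNReal.ofReal_mul hPinv0.le]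
  -- Step 4: apply the Hoelder hypothesis to EQ \ F
  have h4 : ν (EQ \ F) / ν EQ ≤ ENNReal.ofReal (1 / 2) := by
    calc ν (EQ \ F) / ν EQ
        ≤ ENNReal.ofReal C₁ * (μ (EQ \ F) / μ EQ) ^ (1 / q) :=
          hHolder (EQ \ F) Set.diff_subset (hEm.diff hFmeas)
      _ ≤ ENNReal.ofReal C₁ * (ENNReal.ofReal (P⁻¹ * C₂)) ^ (1 / q) := by
          refine mul_le_mul_right (ENNReal.rpow_le_rpow ?_ (by positivity)) _
          exact ENNReal.div_le_of_le_mul h3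
      _ = ENNReal.ofReal (C₁ * (P⁻¹ * C₂) ^ (1 / q)) := by
          rw [ENNReal.ofReal_rpow_of_pos (by positivity),
            ← ENNReal.ofReal_mul hC₁0.le]
      _ = ENNReal.ofReal (1 / 2) := by rw [hkey]
  have h5 : ν (EQ \ F) ≤ ENNReal.ofReal (1 / 2) * ν EQ :=
    (ENNReal.div_le_iff_le_mul (Or.inl hνE_0) (Or.inl hνE_t)).1 h4
  -- Step 5: ν F ≥ (1/2) ν EQ
  have hhalf : ENNReal.ofReal (1 / 2) * ν EQ + ENNReal.ofReal (1 / 2) * ν EQ = ν EQ := by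
    rw [← add_mul, ← ENNReal.ofReal_add (by norm_num) (by norm_num)]
    norm_num
  have h6 : ENNReal.ofReal (1 / 2) * ν EQ ≤ ν F := by
    have hcover : ν EQ ≤ ν (EQ \ F) + ν (EQ ∩ F) := by
      conv_lhs => rw [← Set.diff_union_inter EQ F]
      exact measure_union_le _ _
    have : ENNReal.ofReal (1 / 2) * ν EQ + ENNReal.ofReal (1 / 2) * ν EQ
        ≤ ENNReal.ofReal (1 / 2) * ν EQ + ν (EQ ∩ F) := by
      rw [hhalf]
      exact hcover.trans (add_le_add_left h5 _)
    have h7 := (ENNReal.add_le_add_iff_left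
      (ENNReal.mul_ne_top ENNReal.ofReal_ne_top hνE_t)).1 this
    exact h7.trans (measure_mono Set.inter_subset_right)
  -- Step 6: conclude
  have h8 : ENNReal.ofReal ((2 * C₃)⁻¹) ≤ ν F / ν Q := by
    rw [ENNReal.le_div_iff_mul_le (Or.inl hνQ0.ne') (Or.inl hνQt.ne)]
    calc ENNReal.ofReal ((2 * C₃)⁻¹) * ν Q
        ≤ ENNReal.ofReal ((2 * C₃)⁻¹) * (ENNReal.ofReal C₃ * ν EQ) :=
          mul_le_mul_right hνQE _
      _ = ENNReal.ofReal ((2 * C₃)⁻¹ * C₃) * ν EQ := by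
          rw [← mul_assoc, ← ENNReal.ofReal_mul (by positivity)]
      _ = ENNReal.ofReal (1 / 2) * ν EQ := by
          congr 1
          field_simp
      _ ≤ ν F := h6
  refine lt_of_lt_of_le ?_ h8
  rw [ENNReal.ofReal_lt_ofReal_iff (by positivity)]
  rw [inv_lt_inv₀ (by linarith) (by positivity)]
  linarith
end

section
/- Let (X, 𝔄) be a measurable space and let σ, ω₀, ω be nonnegative σ-finite measures on X with ω ≪ ω₀ ≪ σ, and denote by dω₀/dσ, dω/dω₀ and dω/dσ the corresponding Radon–Nikodym derivatives. Let 1 < p < ∞ and 1 < q < ∞, and set r = pq/(p+q−1); then 1 < r < min{p, q}. Let Δ ∈ 𝔄 be a set with 0 < σ(Δ) < ∞, 0 < ω₀(Δ) < ∞ and 0 < ω(Δ) < ∞, and suppose there are constants C₀, C₁ ≥ 1 such that ((1/σ(Δ)) ∫_Δ (dω₀/dσ)^p dσ)^{1/p} ≤ C₀ ω₀(Δ)/σ(Δ) and ((1/ω₀(Δ)) ∫_Δ (dω/dω₀)^q dω₀)^{1/q} ≤ C₁ ω(Δ)/ω₀(Δ). Then ((1/σ(Δ)) ∫_Δ (dω/dσ)^r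 dσ)^{1/r} ≤ C₁ C₀^{1/q'} ω(Δ)/σ(Δ), where q' = q/(q−1) is the Hölder conjugate of q. In particular, if the two reverse Hölder inequalities hold uniformly over a family of sets Δ (e.g. all surface balls), then the r-reverse Hölder inequality for dω/dσ holds uniformly over the same family with constant C₁ C₀^{1/q'}. -/
open MeasureTheory
open scoped ENNReal

open Real in
theorem rh_aux_real (S M W K0 K1 p q r q' : ℝ) (hS : 0 < S) (hM : 0 < M) (hW : 0 < W)
    (hK0 : 0 < K0) (hK1 : 0 < K1) (hp : 1 < p) (hq : 1 < q)
    (hr : r = p * q / (p + q - 1)) (hq' : q' = q / (q - 1)) :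
    (S⁻¹ * (((K1 * W / M) ^ q * M) ^ (r / q) * ((K0 * M / S) ^ p * S) ^ ((q - r) / q))) ^ (1 / r)
      = K1 * K0 ^ (1 / q') * W / S := by
  have hq0 : (0:ℝ) < q := by linarith
  have hd : (0:ℝ) < p + q - 1 := by linarith
  have hr0 : 0 < r := by rw [hr]; positivity
  have hR : 0 < K1 * K0 ^ (1 / q') * W / S := by positivity
  refine Real.log_injOn_pos (Set.mem_Ioi.2 (by positivity)) (Set.mem_Ioi.2 hR) ?_
  simp (disch := positivity) only [Real.log_rpow, Real.log_mul, Real.log_div, Real.log_inv]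
  subst hr hq'
  field_simp
  ring

/-- **Composition of reverse Hölder inequalities** (the measure-theoretic content
of Lemma `lemma:weights` of the paper).  Let `σ, ω₀, ω` be σ-finite measures on a
measurable space with `ω ≪ ω₀ ≪ σ`.  Let `1 < p, q < ∞` and set
`r = pq/(p+q-1)`; then `1 < r < min{p,q}`.  If on a set `Δ` of finite positive
measure (for all three measures) the Radon–Nikodym derivatives satisfy
`(⨍_Δ (dω₀/dσ)^p dσ)^{1/p} ≤ C₀ ω₀(Δ)/σ(Δ)` and
`(⨍_Δ (dω/dω₀)^q dω₀)^{1/q} ≤ C₁ ω(Δ)/ω₀(Δ)`, then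
`(⨍_Δ (dω/dσ)^r dσ)^{1/r} ≤ C₁ C₀^{1/q'} ω(Δ)/σ(Δ)`, where `q' = q/(q-1)`. -/
theorem reverse_holder_composition {X : Type*} [MeasurableSpace X]
    (σ ω₀ ω : Measure X) [SigmaFinite σ] [SigmaFinite ω₀] [SigmaFinite ω]
    (hωω₀ : ω ≪ ω₀) (hω₀σ : ω₀ ≪ σ)
    (p q r q' : ℝ) (hp : 1 < p) (hq : 1 < q)
    (hr : r = p * q / (p + q - 1)) (hq' : q' = q / (q - 1))
    (Δ : Set X) (hΔ : MeasurableSet Δ)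
    (hσΔ : 0 < σ Δ) (hσΔ' : σ Δ < ⊤)
    (hω₀Δ : 0 < ω₀ Δ) (hω₀Δ' : ω₀ Δ < ⊤)
    (hωΔ : 0 < ω Δ) (hωΔ' : ω Δ < ⊤)
    (C₀ C₁ : ℝ) (hC₀ : 1 ≤ C₀) (hC₁ : 1 ≤ C₁)
    (hRH₀ : ((σ Δ)⁻¹ * ∫⁻ x in Δ, ω₀.rnDeriv σ x ^ p ∂σ) ^ (1 / p) ≤
      ENNReal.ofReal C₀ * ω₀ Δ / σ Δ)
    (hRH₁ : ((ω₀ Δ)⁻¹ * ∫⁻ x in Δ, ω.rnDeriv ω₀ x ^ q ∂ω₀) ^ (1 / q) ≤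
      ENNReal.ofReal C₁ * ω Δ / ω₀ Δ) :
    1 < r ∧ r < min p q ∧
      ((σ Δ)⁻¹ * ∫⁻ x in Δ, ω.rnDeriv σ x ^ r ∂σ) ^ (1 / r) ≤
        ENNReal.ofReal (C₁ * C₀ ^ (1 / q')) * ω Δ / σ Δ := by
  have hp0 : (0:ℝ) < p := by linarith
  have hq0 : (0:ℝ) < q := by linarith
  have hd : (0:ℝ) < p + q - 1 := by linarith
  have hkey : r * (p + q - 1) = p * q := by rw [hr]; field_simp
  have hr1 : 1 < r := by rw [hr, lt_div_iff₀ hd]; nlinarith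
  have hr0 : (0:ℝ) < r := by linarith
  have hrq : r < q := by rw [hr, div_lt_iff₀ hd]; nlinarith
  have hrp : r < p := by rw [hr, div_lt_iff₀ hd]; nlinarith
  have hqr0 : (0:ℝ) < q - r := by linarith
  refine ⟨hr1, lt_min hrp hrq, ?_⟩
  set f := ω.rnDeriv ω₀ with hf
  set g := ω₀.rnDeriv σ with hg
  have mf : Measurable f := Measure.measurable_rnDeriv ω ω₀
  have mg : Measurable g := Measure.measurable_rnDeriv ω₀ σ
  set A := ∫⁻ x in Δ, f x ^ q ∂ω₀ with hA_def
  set B := ∫⁻ x in Δ, g x ^ p ∂σ with hB_def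
  -- conjugate exponents q/r and q/(q-r)
  have hab : (q / r).HolderConjugate (q / (q - r)) := by
    rw [Real.holderConjugate_iff]
    constructor
    · rw [lt_div_iff₀ hr0]; linarith
    · rw [inv_div, inv_div]; field_simp; ring
  -- Hölder step
  have key : ∫⁻ x in Δ, ω.rnDeriv σ x ^ r ∂σ ≤ A ^ (r / q) * B ^ ((q - r) / q) := by
    set F : X → ℝ≥0∞ := fun x => f x ^ r * g x ^ (r / q) with hF
    set G : X → ℝ≥0∞ := fun x => g x ^ (r * (q - 1) / q) with hG
    have hmF : Measurable F := (mf.pow_const r).mul (mg.pow_const (r / q))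
    have hmG : Measurable G := mg.pow_const _
    have hae : ∀ᵐ x ∂σ.restrict Δ, ω.rnDeriv σ x ^ r = (F * G) x := by
      filter_upwards [ae_restrict_of_ae (Measure.rnDeriv_mul_rnDeriv hωω₀).symm] with x hx
      rw [hx]
      simp only [Pi.mul_apply, hF, hG]
      rw [ENNReal.mul_rpow_of_nonneg _ _ hr0.le, mul_assoc,
        ← ENNReal.rpow_add_of_nonneg (x := g x) (r / q) (r * (q - 1) / q)
          (div_nonneg hr0.le hq0.le)
          (div_nonneg (mul_nonneg hr0.le (by linarith)) hq0.le),
        show r / q + r * (q - 1) / q = r by field_simp; ring]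
    rw [lintegral_congr_ae hae]
    refine le_trans (ENNReal.lintegral_mul_le_Lp_mul_Lq _ hab hmF.aemeasurable
      hmG.aemeasurable) ?_
    have e1 : ∀ x, F x ^ (q / r) = f x ^ q * g x := by
      intro x
      rw [hF]
      simp only
      rw [ENNReal.mul_rpow_of_nonneg _ _ (by positivity), ← ENNReal.rpow_mul,
        ← ENNReal.rpow_mul, show r * (q / r) = q by field_simp,
        show r / q * (q / r) = 1 by field_simp, ENNReal.rpow_one]
    have e2 : ∀ x, G x ^ (q / (q - r)) = g x ^ p := by
      intro x
      rw [hG]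
      simp only
      rw [← ENNReal.rpow_mul]
      congr 1
      field_simp
      nlinarith [hkey]
    have h1 : ∫⁻ x in Δ, F x ^ (q / r) ∂σ = A := by
      simp_rw [e1]
      rw [hA_def, ← setLIntegral_rnDeriv_mul hω₀σ (mf.pow_const q).aemeasurable hΔ]
      exact lintegral_congr fun x => mul_comm _ _
    have h2 : ∫⁻ x in Δ, G x ^ (q / (q - r)) ∂σ = B := by simp_rw [e2]; rfl
    rw [h1, h2, one_div_div, one_div_div]
  -- bounds on A and B from the hypotheses
  have hA : A ≤ (ENNReal.ofReal C₁ * ω Δ / ω₀ Δ) ^ q * ω₀ Δ := by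
    have h := ENNReal.rpow_le_rpow hRH₁ hq0.le
    rw [← ENNReal.rpow_mul, one_div, inv_mul_cancel₀ hq0.ne', ENNReal.rpow_one] at h
    calc A = ω₀ Δ * ((ω₀ Δ)⁻¹ * A) := by
            rw [← mul_assoc, ENNReal.mul_inv_cancel hω₀Δ.ne' hω₀Δ'.ne, one_mul]
      _ ≤ ω₀ Δ * ((ENNReal.ofReal C₁ * ω Δ / ω₀ Δ) ^ q) := mul_le_mul_right h _
      _ = _ := mul_comm _ _
  have hB : B ≤ (ENNReal.ofReal C₀ * ω₀ Δ / σ Δ) ^ p * σ Δ := by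
    have h := ENNReal.rpow_le_rpow hRH₀ hp0.le
    rw [← ENNReal.rpow_mul, one_div, inv_mul_cancel₀ hp0.ne', ENNReal.rpow_one] at h
    calc B = σ Δ * ((σ Δ)⁻¹ * B) := by
            rw [← mul_assoc, ENNReal.mul_inv_cancel hσΔ.ne' hσΔ'.ne, one_mul]
      _ ≤ σ Δ * ((ENNReal.ofReal C₀ * ω₀ Δ / σ Δ) ^ p) := mul_le_mul_right h _
      _ = _ := mul_comm _ _
  have step : ((σ Δ)⁻¹ * ∫⁻ x in Δ, ω.rnDeriv σ x ^ r ∂σ) ^ (1 / r) ≤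
      ((σ Δ)⁻¹ * (((ENNReal.ofReal C₁ * ω Δ / ω₀ Δ) ^ q * ω₀ Δ) ^ (r / q) *
        ((ENNReal.ofReal C₀ * ω₀ Δ / σ Δ) ^ p * σ Δ) ^ ((q - r) / q))) ^ (1 / r) := by
    refine ENNReal.rpow_le_rpow (mul_le_mul_right ?_ _) (by positivity)
    exact le_trans key (mul_le_mul' (ENNReal.rpow_le_rpow hA (by positivity))
      (ENNReal.rpow_le_rpow hB (by positivity)))
  refine le_trans step (le_of_eq ?_)
  -- final algebraic identity, transferred from ℝ
  have hC₀0 : (0:ℝ) < C₀ := by linarith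
  have hC₁0 : (0:ℝ) < C₁ := by linarith
  have hfin : ∀ (c : ℝ) (u v : ℝ≥0∞) (e : ℝ), 0 ≤ e → u ≠ 0 → u ≠ ⊤ → v ≠ ⊤ →
      (ENNReal.ofReal c * v / u) ^ e * u ≠ ⊤ := by
    intro c u v e he hu0 hut hvt
    exact ENNReal.mul_ne_top (ENNReal.rpow_ne_top_of_nonneg he
      (ENNReal.mul_ne_top (ENNReal.mul_ne_top ENNReal.ofReal_ne_top hvt)
        (ENNReal.inv_ne_top.2 hu0))) hut
  have hLne : (σ Δ)⁻¹ * (((ENNReal.ofReal C₁ * ω Δ / ω₀ Δ) ^ q * ω₀ Δ) ^ (r / q) *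
      ((ENNReal.ofReal C₀ * ω₀ Δ / σ Δ) ^ p * σ Δ) ^ ((q - r) / q)) ≠ ⊤ := by
    exact ENNReal.mul_ne_top (ENNReal.inv_ne_top.2 hσΔ.ne')
      (ENNReal.mul_ne_top
        (ENNReal.rpow_ne_top_of_nonneg (by positivity)
          (hfin C₁ (ω₀ Δ) (ω Δ) q hq0.le hω₀Δ.ne' hω₀Δ'.ne hωΔ'.ne))
        (ENNReal.rpow_ne_top_of_nonneg (by positivity)
          (hfin C₀ (σ Δ) (ω₀ Δ) p hp0.le hσΔ.ne' hσΔ'.ne hω₀Δ'.ne)))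
  have hRne : ENNReal.ofReal (C₁ * C₀ ^ (1 / q')) * ω Δ / σ Δ ≠ ⊤ :=
    ENNReal.mul_ne_top (ENNReal.mul_ne_top ENNReal.ofReal_ne_top hωΔ'.ne)
      (ENNReal.inv_ne_top.2 hσΔ.ne')
  rw [← ENNReal.toReal_eq_toReal_iff' (ENNReal.rpow_ne_top_of_nonneg (by positivity) hLne) hRne]
  rw [← ENNReal.toReal_rpow]
  simp only [ENNReal.toReal_mul, ENNReal.toReal_div, ENNReal.toReal_inv, ← ENNReal.toReal_rpow,
    ENNReal.toReal_ofReal hC₀0.le, ENNReal.toReal_ofReal hC₁0.le,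
    ENNReal.toReal_ofReal (by positivity : (0:ℝ) ≤ C₁ * C₀ ^ (1 / q'))]
  have hS : 0 < (σ Δ).toReal := ENNReal.toReal_pos hσΔ.ne' hσΔ'.ne
  have hM : 0 < (ω₀ Δ).toReal := ENNReal.toReal_pos hω₀Δ.ne' hω₀Δ'.ne
  have hW : 0 < (ω Δ).toReal := ENNReal.toReal_pos hωΔ.ne' hωΔ'.ne
  exact rh_aux_real _ _ _ _ _ p q r q' hS hM hW hC₀0 hC₁0 hp hq hr hq'
end
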